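/- For every imprecise probability tree 𝒫, every upper expectation tree Q̄, every situation s, and every pointwise non-increasing sequence (f_n) of upper semicontinuous, bounded-above variables f_n: Ω → ℝ̄ with pointwise limit f, one has lim_{n→∞} Ē_𝒫(f_n|s) = Ē_𝒫(f|s) and lim_{n→∞} Ē_Q̄(f_n|s) = Ē_Q̄(f|s). -/

import Mathlib

open Filter MeasureTheory Topology
open scoped ENNReal

namespace UEPaper

variable {X : Type} [Fintype X] [Nonempty X] [DecidableEq X]

/-- The set of paths: infinite sequences of states (`ω i` is the `(i+1)`-th state). -/
abbrev Path (X : Type) := ℕ → X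

/-- The prefix `ω^k` of length `k` of a path, as a list (a situation). -/
def prefixList (ω : Path X) (k : ℕ) : List X := (List.range k).map ω

/-- The cylinder event `Γ(s)` of a situation `s`. -/
def cyl (s : List X) : Set (Path X) := {ω | prefixList ω s.length = s}

/-- `f` is `n`-measurable: it depends only on the first `n` states. -/
def NMeas (n : ℕ) (f : Path X → EReal) : Prop :=
  ∀ ω ω' : Path X, prefixList ω n = prefixList ω' n → f ω = f ω'

/-- A gamble: a bounded real-valued global variable. -/
def IsGamble (f : Path X → EReal) : Prop :=
  ∃ B : ℝ, ∀ ω, -(B : EReal) ≤ f ω ∧ f ω ≤ (B : EReal)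

/-- A finitary gamble: an `n`-measurable gamble for some `n`. -/
def IsFinGamble (f : Path X → EReal) : Prop :=
  (∃ n, NMeas n f) ∧ IsGamble f

/-- An upper expectation tree: a coherent upper expectation at each situation. -/
structure UpperExpTree (X : Type) [Fintype X] [Nonempty X] where
  Q : List X → (X → ℝ) → ℝ
  le_sup : ∀ (s : List X) (f : X → ℝ), Q s f ≤ ⨆ x, f x
  subadd : ∀ (s : List X) (f g : X → ℝ), Q s (f + g) ≤ Q s f + Q s g
  pos_homog : ∀ (s : List X) (l : ℝ) (f : X → ℝ), 0 ≤ l → Q s (l • f) = l * Q s f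

/-- A (real-valued) supermartingale for the upper expectation tree `Q`. -/
def IsSupermart (Q : UpperExpTree X) (M : List X → ℝ) : Prop :=
  ∀ s : List X, Q.Q s (fun x => M (s ++ [x])) ≤ M s

/-- The game-theoretic upper expectation of a real-valued variable (used on gambles):
the infimum of `M s` over bounded-below supermartingales `M` with
`liminf_k M(ω^k) ≥ f(ω)` on `Γ(s)`. -/
noncomputable def gtG (Q : UpperExpTree X) (f : Path X → ℝ) (s : List X) : EReal :=
  sInf {a : EReal | ∃ M : List X → ℝ, IsSupermart Q M ∧ (∃ B : ℝ, ∀ t, B ≤ M t) ∧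
    (∀ ω ∈ cyl s,
      (f ω : EReal) ≤ Filter.liminf (fun k => ((M (prefixList ω k) : ℝ) : EReal)) atTop) ∧
    a = ((M s : ℝ) : EReal)}

/-- Extension to bounded-below variables, by continuity w.r.t. upper cuts:
`Ē(f|s) = lim_{c → +∞} Ē(min(f,c)|s)` (the limit of this nondecreasing net is a supremum). -/
noncomputable def gtBB (Q : UpperExpTree X) (f : Path X → EReal) (s : List X) : EReal :=
  ⨆ c : ℝ, gtG Q (fun ω => (f ω ⊓ (c : EReal)).toReal) s

/-- The game-theoretic global upper expectation `Ē_Q̄`, extended to all extended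
real variables by continuity w.r.t. lower cuts:
`Ē(f|s) = lim_{c → −∞} Ē(max(f,c)|s)` (the limit of this nonincreasing net is an infimum). -/
noncomputable def gtUE (Q : UpperExpTree X) (f : Path X → EReal) (s : List X) : EReal :=
  ⨅ c : ℝ, gtBB Q (fun ω => f ω ⊔ (c : EReal)) s

/-- A precise probability tree: a probability mass function at each situation. -/
structure PreciseTree (X : Type) [Fintype X] where
  p : List X → X → ℝ
  nonneg : ∀ (s : List X) (x : X), 0 ≤ p s x
  sum_one : ∀ s : List X, ∑ x, p s x = 1

/-- An imprecise probability tree: a nonempty closed convex set of probability mass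
functions at each situation. -/
structure ImpreciseTree (X : Type) [Fintype X] where
  sets : List X → Set (X → ℝ)
  nonempty' : ∀ s : List X, (sets s).Nonempty
  closed' : ∀ s : List X, IsClosed (sets s)
  convex' : ∀ s : List X, Convex ℝ (sets s)
  prob' : ∀ s : List X, ∀ q ∈ sets s, (∀ x, 0 ≤ q x) ∧ ∑ x, q x = 1

/-- `p ∼ 𝒫`: the precise tree `p` is compatible with the imprecise tree `P`. -/
def Compatible (p : PreciseTree X) (P : ImpreciseTree X) : Prop :=
  ∀ s : List X, p.p s ∈ P.sets s

/-- The probability `P_p(Γ(z)|s)` of the cylinder of `z` conditional on situation `s`. -/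
noncomputable def cylProb (p : List X → X → ℝ) (s z : List X) : ℝ :=
  if s.length < z.length ∧ z.take s.length = s then
    ∏ i ∈ Finset.Ico s.length z.length, p (z.take i) (z.getD i (Classical.arbitrary X))
  else if z.length ≤ s.length ∧ s.take z.length = z then 1 else 0

/-- The σ-algebra `ℱ` on paths generated by the cylinder events. -/
instance cylSigma : MeasurableSpace (Path X) :=
  MeasurableSpace.generateFrom {A | ∃ s : List X, A = cyl s}

/-- `μ` is the probability measure `P_p(·|s)` on `ℱ` determined by the tree `p`. -/
def IsTreeMeasure (p : PreciseTree X) (s : List X) (μ : Measure (Path X)) : Prop :=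
  IsProbabilityMeasure μ ∧ ∀ z : List X, μ (cyl z) = ENNReal.ofReal (cylProb p.p s z)

/-- Positive part of an extended real, in `ℝ≥0∞`. -/
noncomputable def posPart (x : EReal) : ℝ≥0∞ := if x = ⊤ then ⊤ else ENNReal.ofReal x.toReal

/-- The Lebesgue integral `∫ g dμ = ∫ g⁺ dμ − ∫ g⁻ dμ` of an extended-real variable
(well-defined, with value in `(-∞, +∞]`, for bounded-below measurable `g`). -/
noncomputable def integralE (μ : Measure (Path X)) (g : Path X → EReal) : EReal :=
  ((∫⁻ ω, posPart (g ω) ∂μ : ℝ≥0∞) : EReal) - ((∫⁻ ω, posPart (-(g ω)) ∂μ : ℝ≥0∞) : EReal)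

/-- The upper integral `Ē_p(f|s)`: infimum of integrals of bounded-below
`ℱ`-measurable variables dominating `f`. -/
noncomputable def upperInt (μ : Measure (Path X)) (f : Path X → EReal) : EReal :=
  sInf {a : EReal | ∃ g : Path X → EReal, Measurable g ∧ (∃ B : ℝ, ∀ ω, (B : EReal) ≤ g ω) ∧
    (∀ ω, f ω ≤ g ω) ∧ a = integralE μ g}

/-- The measure-theoretic global upper expectation `Ē_𝒫(f|s)`, given the assignment
`Pm` of the measures `P_p(·|s)` to precise trees: the upper envelope of the upper
integrals over all compatible precise trees. -/
noncomputable def muUE (Pm : PreciseTree X → List X → Measure (Path X))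
    (P : ImpreciseTree X) (f : Path X → EReal) (s : List X) : EReal :=
  ⨆ (p : PreciseTree X) (_ : Compatible p P), upperInt (Pm p s) f

/-- The trees `P` and `Q` agree: each `Q̄_s` is the upper envelope of the expectations
corresponding to the credal set `𝒫_s`. -/
def Agree (P : ImpreciseTree X) (Q : UpperExpTree X) : Prop :=
  ∀ (s : List X) (f : X → ℝ),
    Q.Q s f = sSup {r : ℝ | ∃ q ∈ P.sets s, r = ∑ x, f x * q x}

/-- Axioms P1–P5 for a global upper expectation `E` w.r.t. the tree `Q`. -/
structure Axioms (Q : UpperExpTree X) (E : (Path X → EReal) → List X → EReal) : Prop where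
  p1 : ∀ (f : X → ℝ) (s : List X),
    E (fun ω => ((f (ω s.length) : ℝ) : EReal)) s = ((Q.Q s f : ℝ) : EReal)
  p2 : ∀ f : Path X → EReal, IsFinGamble f → ∀ s : List X, E f s = E ((cyl s).indicator f) s
  p3 : ∀ f : Path X → EReal, IsFinGamble f → ∀ s : List X,
    E f s ≤ E (fun ω => E f (prefixList ω (s.length + 1))) s
  p4 : ∀ f g : Path X → EReal, (∀ ω, f ω ≤ g ω) → ∀ s : List X, E f s ≤ E g s
  p5 : ∀ (s : List X) (fn : ℕ → Path X → EReal) (f : Path X → EReal),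
    (∀ n, IsFinGamble (fn n)) → (∃ B : ℝ, ∀ n ω, (B : EReal) ≤ fn n ω) →
    (∀ ω, Tendsto (fun n => fn n ω) atTop (nhds (f ω))) →
    E f s ≤ limsup (fun n => E (fn n) s) atTop

/-- Upper semicontinuity of an extended-real variable on the path space. -/
def USC [TopologicalSpace X] [DiscreteTopology X] (f : Path X → EReal) : Prop :=
  ∀ a : ℝ, IsOpen {ω : Path X | f ω < (a : EReal)}

/-- An `Ω`-capacity (Dellacherie): a monotone `[0,∞]`-valued functional on nonnegative
variables, continuous along nondecreasing sequences, and continuous along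
nonincreasing sequences of nonnegative real-valued upper semicontinuous functions. -/
def IsCapacity [TopologicalSpace X] [DiscreteTopology X]
    (F : (Path X → EReal) → EReal) : Prop :=
  (∀ f : Path X → EReal, (∀ ω, 0 ≤ f ω) → 0 ≤ F f) ∧
  (∀ f g : Path X → EReal, (∀ ω, 0 ≤ f ω) → (∀ ω, 0 ≤ g ω) → (∀ ω, f ω ≤ g ω) → F f ≤ F g) ∧
  (∀ fn : ℕ → Path X → EReal, (∀ n ω, 0 ≤ fn n ω) → Monotone fn →
    Tendsto (fun n => F (fn n)) atTop (nhds (F (fun ω => ⨆ n, fn n ω)))) ∧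
  (∀ fn : ℕ → Path X → EReal, (∀ n ω, 0 ≤ fn n ω ∧ fn n ω < ⊤) → (∀ n, USC (fn n)) →
    Antitone fn →
    Tendsto (fun n => F (fn n)) atTop (nhds (F (fun ω => ⨅ n, fn n ω))))

open Classical in
/-- The metric `δ(ω,ω') = 2^{-n}`, `n` the first (1-based) index where `ω` and `ω'` differ. -/
noncomputable def delta (ω ω' : Path X) : ℝ :=
  if h : ω = ω' then 0
  else (1 / 2 : ℝ) ^ (Nat.find (Function.ne_iff.mp h) + 1)

/-- The product topology on the path space (with `X` discrete). -/
def prodTop (X : Type) : TopologicalSpace (ℕ → X) :=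
  @Pi.topologicalSpace ℕ (fun _ => X) (fun _ => ⊥)

set_option linter.unusedSectionVars false

/-! ### prefix basics -/

noncomputable def pext (t : List X) : Path X := fun i => t.getD i (Classical.arbitrary X)

@[simp] lemma prefixList_length (ω : Path X) (k : ℕ) : (prefixList ω k).length = k := by
  simp [prefixList]

lemma prefixList_getElem (ω : Path X) {k i : ℕ} (h : i < k) :
    (prefixList ω k)[i]'(by simpa using h) = ω i := by
  simp [prefixList]

lemma prefixList_eq_iff {ω ω' : Path X} {k : ℕ} :
    prefixList ω k = prefixList ω' k ↔ ∀ i < k, ω i = ω' i := by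
  constructor
  · intro h i hi
    exact (prefixList_getElem ω hi).symm.trans
      ((List.getElem_of_eq h _).trans (prefixList_getElem ω' hi))
  · intro h
    apply List.ext_getElem (by simp)
    intro i h1 h2
    simp only [prefixList_length] at h1
    rw [prefixList_getElem ω h1, prefixList_getElem ω' h1, h i h1]

lemma mem_cyl {ω : Path X} {t : List X} : ω ∈ cyl t ↔ prefixList ω t.length = t := Iff.rfl

lemma mem_cyl_iff_getElem {ω : Path X} {t : List X} :
    ω ∈ cyl t ↔ ∀ i (h : i < t.length), ω i = t[i] := by
  rw [mem_cyl]
  constructor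
  · intro h i hi
    exact (prefixList_getElem ω hi).symm.trans (List.getElem_of_eq h _)
  · intro h
    apply List.ext_getElem (by simp)
    intro i h1 h2
    rw [prefixList_getElem ω (by simpa using h1), h i h2]

lemma pext_mem_cyl (t : List X) : pext t ∈ cyl t := by
  rw [mem_cyl_iff_getElem]
  intro i h
  simp [pext, List.getD_eq_getElem?_getD, List.getElem?_eq_getElem h]

lemma prefixList_congr {ω ω' : Path X} {k m : ℕ} (hkm : k ≤ m)
    (h : prefixList ω m = prefixList ω' m) : prefixList ω k = prefixList ω' k := by
  rw [prefixList_eq_iff] at h ⊢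
  exact fun i hi => h i (lt_of_lt_of_le hi hkm)

lemma prefixList_take {ω : Path X} {k m : ℕ} (h : k ≤ m) :
    (prefixList ω m).take k = prefixList ω k := by
  apply List.ext_getElem (by simp [h])
  intro i h1 h2
  simp only [prefixList_length] at h2
  rw [prefixList_getElem ω h2, List.getElem_take]
  exact prefixList_getElem ω (lt_of_lt_of_le h2 h)

lemma prefixList_pext {t : List X} {k : ℕ} (h : k ≤ t.length) :
    prefixList (pext t) k = t.take k := by
  apply List.ext_getElem (by simp [h])
  intro i h1 h2
  simp only [prefixList_length] at h1
  rw [prefixList_getElem _ h1]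
  simp only [List.getElem_take]
  simp [pext, List.getD_eq_getElem?_getD, List.getElem?_eq_getElem (lt_of_lt_of_le h1 h)]

lemma prefixList_pext_prefixList (ω : Path X) {k m : ℕ} (h : k ≤ m) :
    prefixList (pext (prefixList ω m)) k = prefixList ω k := by
  have h1 : prefixList (pext (prefixList ω m)) m = prefixList ω m := by
    have := pext_mem_cyl (prefixList ω m)
    rwa [mem_cyl, prefixList_length] at this
  exact prefixList_congr h h1

lemma cyl_prefix_antitone (ω : Path X) {k m : ℕ} (h : k ≤ m) :
    cyl (prefixList ω m) ⊆ cyl (prefixList ω k) := by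
  intro ω' hω'
  rw [mem_cyl, prefixList_length] at hω' ⊢
  exact prefixList_congr h hω'

lemma mem_cyl_prefixList (ω : Path X) (k : ℕ) : ω ∈ cyl (prefixList ω k) := by
  rw [mem_cyl, prefixList_length]

lemma prefixList_of_mem_cyl {ω : Path X} {t : List X} (h : ω ∈ cyl t) {k : ℕ}
    (hk : k ≤ t.length) : prefixList ω k = t.take k := by
  rw [mem_cyl] at h
  rw [← h, prefixList_take hk]

lemma pext_mem_cyl_of_prefix {s t : List X} (h : s <+: t) : pext t ∈ cyl s := by
  rw [mem_cyl]
  have h1 : prefixList (pext t) s.length = t.take s.length := prefixList_pext h.length_le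
  rw [h1, ← List.prefix_iff_eq_take.mp h]

/-! ### topology -/

section Topo
variable [TopologicalSpace X] [DiscreteTopology X]

lemma isOpen_cyl (t : List X) : IsOpen (cyl t) := by
  have : cyl t = ⋂ (i : Fin t.length), (fun ω : Path X => ω i) ⁻¹' {t[(i : ℕ)]} := by
    ext ω
    simp only [Set.mem_iInter, Set.mem_preimage, Set.mem_singleton_iff, mem_cyl_iff_getElem]
    exact ⟨fun h i => h i i.2, fun h i hi => h ⟨i, hi⟩⟩
  rw [this]
  exact isOpen_iInter_of_finite fun i =>
    (continuous_apply (i : ℕ)).isOpen_preimage _ (isOpen_discrete _)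

lemma isClosed_cyl (t : List X) : IsClosed (cyl t) := by
  have : cyl t = ⋂ (i : Fin t.length), (fun ω : Path X => ω i) ⁻¹' {t[(i : ℕ)]} := by
    ext ω
    simp only [Set.mem_iInter, Set.mem_preimage, Set.mem_singleton_iff, mem_cyl_iff_getElem]
    exact ⟨fun h i => h i i.2, fun h i hi => h ⟨i, hi⟩⟩
  rw [this]
  exact isClosed_iInter fun i =>
    IsClosed.preimage (continuous_apply (i : ℕ)) (isClosed_discrete _)

lemma isOpen_pred_prefix (Pred : List X → Prop) (j : ℕ) :
    IsOpen {ω : Path X | Pred (prefixList ω j)} := by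
  have : {ω : Path X | Pred (prefixList ω j)} =
      ⋃ (t : {t : List X // t.length = j ∧ Pred t}), cyl (t : List X) := by
    ext ω
    simp only [Set.mem_setOf_eq, Set.mem_iUnion]
    constructor
    · intro h
      exact ⟨⟨prefixList ω j, by simp, h⟩, mem_cyl_prefixList ω j⟩
    · rintro ⟨⟨t, hlen, ht⟩, hmem⟩
      rw [mem_cyl] at hmem
      simp only at hmem
      rw [hlen] at hmem
      rw [hmem]
      exact ht
  rw [this]
  exact isOpen_iUnion fun t => isOpen_cyl _

/-- Uniform-depth covering from compactness. -/
lemma exists_uniform_depth (s : List X) (Stop : List X → Prop)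
    (h : ∀ ω ∈ cyl s, ∃ j, Stop (prefixList ω j)) :
    ∃ m, s.length ≤ m ∧ ∀ ω ∈ cyl s, ∃ j ≤ m, Stop (prefixList ω j) := by
  have hcomp : IsCompact (cyl s) := (isClosed_cyl s).isCompact
  have hcov : cyl s ⊆ ⋃ j : ℕ, {ω : Path X | Stop (prefixList ω j)} := by
    intro ω hω
    obtain ⟨j, hj⟩ := h ω hω
    exact Set.mem_iUnion.2 ⟨j, hj⟩
  obtain ⟨F, hF⟩ := hcomp.elim_finite_subcover _ (fun j => isOpen_pred_prefix Stop j) hcov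
  classical
  refine ⟨max (F.sup id) s.length, le_max_right _ _, fun ω hω => ?_⟩
  obtain ⟨j, hjF, hj⟩ := Set.mem_iUnion₂.1 (hF hω)
  exact ⟨j, le_trans (Finset.le_sup (f := id) hjF) (le_max_left _ _), hj⟩

/-- Cylinders form a neighbourhood basis. -/
lemma exists_cyl_subset {O : Set (Path X)} (hO : IsOpen O) {ω : Path X} (hω : ω ∈ O) :
    ∃ m, ∀ ω', prefixList ω' m = prefixList ω m → ω' ∈ O := by
  obtain ⟨I, u, hIu, hsub⟩ := isOpen_pi_iff.1 hO ω hω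
  classical
  refine ⟨I.sup id + 1, fun ω' hω' => ?_⟩
  apply hsub
  intro i hi
  have hilt : i < I.sup id + 1 := Nat.lt_succ_of_le (Finset.le_sup (f := id) hi)
  have := prefixList_eq_iff.1 hω' i hilt
  rw [this]
  exact (hIu i hi).2

end Topo

/-! ### measurability -/

lemma measurableSet_cyl (t : List X) : MeasurableSet (cyl t) :=
  MeasurableSpace.measurableSet_generateFrom ⟨t, rfl⟩

lemma measurable_of_nmeas {α : Type*} [MeasurableSpace α] (g : List X → α) (j : ℕ) :
    Measurable fun ω : Path X => g (prefixList ω j) := by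
  intro S hS
  have : (fun ω : Path X => g (prefixList ω j)) ⁻¹' S =
      ⋃ (t : {t : List X // t.length = j ∧ g t ∈ S}), cyl (t : List X) := by
    ext ω
    simp only [Set.mem_preimage, Set.mem_iUnion]
    constructor
    · intro h
      exact ⟨⟨prefixList ω j, by simp, h⟩, mem_cyl_prefixList ω j⟩
    · rintro ⟨⟨t, hlen, ht⟩, hmem⟩
      rw [mem_cyl] at hmem
      simp only at hmem
      rw [hlen] at hmem
      rw [hmem]
      exact ht
  rw [this]
  exact MeasurableSet.iUnion fun t => measurableSet_cyl _

/-! ### EReal helpers -/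

lemma ereal_le_of_forall_real_gt {x y : EReal} (h : ∀ a : ℝ, y < (a : EReal) → x ≤ (a : EReal)) :
    x ≤ y := by
  by_contra hc
  push_neg at hc
  obtain ⟨z, hz1, hz2⟩ := EReal.exists_between_coe_real hc
  exact absurd (h z hz1) (not_le.2 hz2)

lemma ereal_le_add_of_forall_pos {x y : EReal}
    (h : ∀ ε : ℝ, 0 < ε → x ≤ y + (ε : EReal)) : x ≤ y := by
  induction y with
  | bot =>
    have := h 1 one_pos
    simpa using this
  | coe r =>
    apply ereal_le_of_forall_real_gt
    intro a ha
    have hra : (0 : ℝ) < a - r := by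
      have := EReal.coe_lt_coe_iff.1 ha
      linarith
    calc x ≤ (r : EReal) + ((a - r : ℝ) : EReal) := h _ hra
    _ = (a : EReal) := by rw [← EReal.coe_add]; norm_num
  | top => exact le_top

lemma ereal_eq_bot_of_forall_le {x : EReal} (h : ∀ a : ℝ, x ≤ (a : EReal)) : x = ⊥ := by
  by_contra hc
  obtain ⟨z, hz1, hz2⟩ := EReal.exists_between_coe_real (Ne.bot_lt hc)
  exact absurd (h z) (not_le.2 hz2)




/-! ### local upper expectation lemmas -/

lemma Q_le_of_forall_le (Q : UpperExpTree X) (s : List X) {g : X → ℝ} {b : ℝ}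
    (h : ∀ x, g x ≤ b) : Q.Q s g ≤ b :=
  le_trans (Q.le_sup s g) (ciSup_le h)

lemma Q_zero (Q : UpperExpTree X) (s : List X) : Q.Q s 0 = 0 := by
  have := Q.pos_homog s 0 0 le_rfl
  simpa using this

lemma Q_mono (Q : UpperExpTree X) (s : List X) {g h : X → ℝ} (hle : ∀ x, g x ≤ h x) :
    Q.Q s g ≤ Q.Q s h := by
  have hgh : g = h + (g - h) := by funext x; simp
  calc Q.Q s g = Q.Q s (h + (g - h)) := by rw [← hgh]
  _ ≤ Q.Q s h + Q.Q s (g - h) := Q.subadd s h (g - h)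
  _ ≤ Q.Q s h + 0 := by
      gcongr
      exact Q_le_of_forall_le Q s fun x => by simpa using sub_nonpos.2 (hle x)
  _ = Q.Q s h := by ring

lemma Q_ge_of_forall_ge (Q : UpperExpTree X) (s : List X) {g : X → ℝ} {b : ℝ}
    (h : ∀ x, b ≤ g x) : b ≤ Q.Q s g := by
  have h0 : (0 : ℝ) = Q.Q s 0 := (Q_zero Q s).symm
  have h1 : Q.Q s 0 ≤ Q.Q s g + Q.Q s (-g) := by
    have : (0 : X → ℝ) = g + (-g) := by funext x; simp
    rw [this]; exact Q.subadd s g (-g)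
  have h2 : Q.Q s (-g) ≤ -b := Q_le_of_forall_le Q s fun x => by simpa using neg_le_neg (h x)
  linarith [h1.trans (by linarith : Q.Q s g + Q.Q s (-g) ≤ Q.Q s g + (-b))]

lemma Q_const (Q : UpperExpTree X) (s : List X) (c : ℝ) : Q.Q s (fun _ => c) = c :=
  le_antisymm (Q_le_of_forall_le Q s fun _ => le_rfl) (Q_ge_of_forall_ge Q s fun _ => le_rfl)

lemma Q_add_const (Q : UpperExpTree X) (s : List X) (g : X → ℝ) (c : ℝ) :
    Q.Q s (fun x => g x + c) ≤ Q.Q s g + c := by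
  have : (fun x => g x + c) = g + (fun _ => c) := rfl
  rw [this]
  exact le_trans (Q.subadd s g _) (by rw [Q_const])

/-! ### backward recursion -/

/-- Backward recursion with fuel: iterated application of the local models to the
terminal function `g`. -/
noncomputable def go (Q : UpperExpTree X) (g : List X → ℝ) : ℕ → List X → ℝ
  | 0, t => g t
  | (n+1), t => Q.Q t (fun x => go Q g n (t ++ [x]))

lemma go_bounds (Q : UpperExpTree X) (g : List X → ℝ) {lo hi : ℝ}
    (hg : ∀ t, lo ≤ g t ∧ g t ≤ hi) : ∀ n t, lo ≤ go Q g n t ∧ go Q g n t ≤ hi := by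
  intro n
  induction n with
  | zero => exact hg
  | succ n ih =>
    intro t
    constructor
    · exact Q_ge_of_forall_ge Q t fun x => (ih (t ++ [x])).1
    · exact Q_le_of_forall_le Q t fun x => (ih (t ++ [x])).2

/-- The natural supermartingale built from an `m`-measurable terminal function. -/
noncomputable def goM (Q : UpperExpTree X) (g : List X → ℝ) (m : ℕ) : List X → ℝ :=
  fun t => go Q g (m - t.length) t

lemma goM_supermart (Q : UpperExpTree X) (g : List X → ℝ) (m : ℕ)
    (hg : ∀ t x, m ≤ t.length → g (t ++ [x]) = g t) :
    IsSupermart Q (goM Q g m) := by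
  intro t
  by_cases h : t.length < m
  · have h1 : m - t.length = (m - (t.length + 1)) + 1 := by omega
    have h2 : ∀ x : X, goM Q g m (t ++ [x]) = go Q g (m - (t.length + 1)) (t ++ [x]) := by
      intro x
      simp only [goM, List.length_append, List.length_cons, List.length_nil]
    have : goM Q g m t = Q.Q t (fun x => goM Q g m (t ++ [x])) := by
      simp only [goM, h1]
      show go Q g ((m - (t.length + 1)) + 1) t = _
      simp only [go]
      congr 1
      funext x
      simp only [List.length_append, List.length_cons, List.length_nil]
    rw [this]
  · push_neg at h
    have h0 : m - t.length = 0 := by omega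
    have h2 : ∀ x : X, goM Q g m (t ++ [x]) = g t := by
      intro x
      have hl : m - (t ++ [x]).length = 0 := by simp only [List.length_append]; omega
      simp only [goM, hl, go]
      exact hg t x h
    have h3 : goM Q g m t = g t := by simp [goM, h0, go]
    rw [h3]
    calc Q.Q t (fun x => goM Q g m (t ++ [x])) = Q.Q t (fun _ => g t) := by
          congr 1; funext x; rw [h2 x]
    _ ≤ g t := le_of_eq (Q_const Q t _)


/-! ### game-theoretic upper expectation: basic lemmas -/

lemma gtG_mono (Q : UpperExpTree X) {g h : Path X → ℝ} (hle : ∀ ω, g ω ≤ h ω) (s : List X) :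
    gtG Q g s ≤ gtG Q h s := by
  apply sInf_le_sInf
  rintro a ⟨M, hM, hB, hlim, rfl⟩
  exact ⟨M, hM, hB, fun ω hω => le_trans (EReal.coe_le_coe_iff.2 (hle ω)) (hlim ω hω), rfl⟩

lemma cut_ne_bot (g : Path X → EReal) (c' c : ℝ) (ω : Path X) :
    (g ω ⊔ (c' : EReal)) ⊓ (c : EReal) ≠ ⊥ := by
  have h1 : ((min c' c : ℝ) : EReal) ≤ (g ω ⊔ (c' : EReal)) ⊓ (c : EReal) := by
    apply le_inf
    · exact le_trans (by exact_mod_cast min_le_left c' c) le_sup_right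
    · exact_mod_cast min_le_right c' c
  intro hb
  rw [hb] at h1
  exact absurd h1 (by simp)

lemma cut_ne_top (g : Path X → EReal) (c' c : ℝ) (ω : Path X) :
    (g ω ⊔ (c' : EReal)) ⊓ (c : EReal) ≠ ⊤ :=
  ne_top_of_le_ne_top (EReal.coe_ne_top c) inf_le_right

lemma gtUE_mono (Q : UpperExpTree X) {g h : Path X → EReal} (hle : ∀ ω, g ω ≤ h ω) (s : List X) :
    gtUE Q g s ≤ gtUE Q h s := by
  apply iInf_mono
  intro c'
  apply iSup_mono
  intro c
  apply gtG_mono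
  intro ω
  exact EReal.toReal_le_toReal (inf_le_inf_right _ (sup_le_sup_right (hle ω) _))
    (cut_ne_bot g c' c ω) (cut_ne_top h c' c ω)

lemma gtBB_of_bounded (Q : UpperExpTree X) {g : Path X → EReal} {lo D : ℝ}
    (hlb : ∀ ω, (lo : EReal) ≤ g ω) (hub : ∀ ω, g ω ≤ (D : EReal)) (s : List X) :
    gtBB Q g s = gtG Q (fun ω => (g ω).toReal) s := by
  have hbot : ∀ ω, g ω ≠ ⊥ := fun ω hb => by
    have := hlb ω; rw [hb] at this; exact absurd this (by simp)
  have htop : ∀ ω, g ω ≠ ⊤ := fun ω => ne_top_of_le_ne_top (EReal.coe_ne_top D) (hub ω)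
  apply le_antisymm
  · apply iSup_le
    intro c
    apply gtG_mono
    intro ω
    have hnb : g ω ⊓ (c : EReal) ≠ ⊥ := by
      intro hbeq
      have h1 : ((min lo c : ℝ) : EReal) ≤ g ω ⊓ (c : EReal) :=
        le_inf (le_trans (by exact_mod_cast min_le_left lo c) (hlb ω))
          (by exact_mod_cast min_le_right lo c)
      rw [hbeq] at h1
      exact absurd h1 (by simp)
    exact EReal.toReal_le_toReal inf_le_left hnb (htop ω)
  · apply le_iSup_of_le D
    apply le_of_eq
    congr 1
    funext ω
    rw [inf_eq_left.2 (hub ω)]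

lemma gtUE_le_gtG_of_bounded (Q : UpperExpTree X) {g : Path X → EReal} {lo D : ℝ}
    (hlb : ∀ ω, (lo : EReal) ≤ g ω) (hub : ∀ ω, g ω ≤ (D : EReal)) (s : List X) :
    gtUE Q g s ≤ gtG Q (fun ω => (g ω).toReal) s := by
  have h1 : gtUE Q g s ≤ gtBB Q (fun ω => g ω ⊔ (lo : EReal)) s := iInf_le _ lo
  have h2 : (fun ω => g ω ⊔ (lo : EReal)) = g := by
    funext ω; exact sup_eq_left.2 (hlb ω)
  rw [h2] at h1
  rwa [gtBB_of_bounded Q hlb hub s] at h1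

lemma gtUE_ge_iInf_gtG (Q : UpperExpTree X) {g : Path X → EReal} {D : ℝ}
    (hub : ∀ ω, g ω ≤ (D : EReal)) (s : List X) :
    (⨅ c' : ℝ, gtG Q (fun ω => (g ω ⊔ (c' : EReal)).toReal) s) ≤ gtUE Q g s := by
  apply iInf_mono
  intro c'
  apply le_iSup_of_le (max D c')
  apply le_of_eq
  congr 1
  funext ω
  congr 1
  refine (inf_eq_left.2 ?_).symm
  show g ω ⊔ (c' : EReal) ≤ ((max D c' : ℝ) : EReal)
  apply sup_le
  · exact le_trans (hub ω) (EReal.coe_le_coe_iff.2 (le_max_left _ _))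
  · exact EReal.coe_le_coe_iff.2 (le_max_right _ _)

/-! ### prefix successor and stability -/

lemma prefixList_succ (ω : Path X) (k : ℕ) :
    prefixList ω (k + 1) = prefixList ω k ++ [ω k] := by
  simp [prefixList, List.range_succ]

lemma stable_prefix {g : List X → ℝ} {m : ℕ}
    (hst : ∀ t x, m ≤ t.length → g (t ++ [x]) = g t) (ω : Path X) :
    ∀ i, m ≤ i → g (prefixList ω i) = g (prefixList ω m) := by
  intro i hi
  induction i with
  | zero => simp_all
  | succ i ih =>
    rcases Nat.lt_or_ge m (i + 1) with h | h
    · have hmi : m ≤ i := by omega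
      rw [prefixList_succ, hst _ _ (by simpa using hmi), ih hmi]
    · have : m = i + 1 := by omega
      rw [this]

/-- The backward recursion value dominates the game-theoretic upper expectation of the
corresponding `m`-measurable variable. -/
lemma gtG_le_goM (Q : UpperExpTree X) (g : List X → ℝ) (m : ℕ) {lo hi : ℝ}
    (hb : ∀ t, lo ≤ g t ∧ g t ≤ hi)
    (hst : ∀ t x, m ≤ t.length → g (t ++ [x]) = g t) (s : List X) :
    gtG Q (fun ω => g (prefixList ω m)) s ≤ ((goM Q g m s : ℝ) : EReal) := by
  apply sInf_le
  refine ⟨goM Q g m, goM_supermart Q g m hst, ⟨lo, fun t => (go_bounds Q g hb _ t).1⟩, ?_, rfl⟩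
  intro ω hω
  have hev : ∀ᶠ k in atTop, ((goM Q g m (prefixList ω k) : ℝ) : EReal)
      = ((g (prefixList ω m) : ℝ) : EReal) := by
    filter_upwards [eventually_ge_atTop m] with k hk
    have h1 : goM Q g m (prefixList ω k) = g (prefixList ω k) := by
      have hz : m - k = 0 := by omega
      simp [goM, hz, go]
    rw [h1, stable_prefix hst ω k hk]
  rw [liminf_congr hev]
  simp


/-! ### the finitary outer approximations -/

/-- `Hr fn k t`: supremum over the cylinder of `t` of the `(-k)`-lower-cut of `fn k`. -/
noncomputable def Hr (fn : ℕ → Path X → EReal) (k : ℕ) (t : List X) : ℝ :=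
  sSup ((fun ω => (fn k ω ⊔ (-(k : ℝ) : EReal)).toReal) '' cyl t)

section Seq

variable {fn : ℕ → Path X → EReal} {f : Path X → EReal} {B0 : ℝ}

lemma cutval_ne_bot (k : ℕ) (ω : Path X) : fn k ω ⊔ (-(k : ℝ) : EReal) ≠ ⊥ := fun hb => by
  have h1 : ((-(k : ℝ) : ℝ) : EReal) ≤ fn k ω ⊔ (-(k : ℝ) : EReal) := le_sup_right
  rw [hb] at h1
  exact absurd h1 (not_le.2 (EReal.bot_lt_coe _))

lemma cutval_le_D (hb0 : ∀ ω, fn 0 ω ≤ (B0 : EReal)) (hanti : Antitone fn) (k : ℕ) (ω : Path X) :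
    fn k ω ⊔ (-(k : ℝ) : EReal) ≤ ((max B0 0 : ℝ) : EReal) := by
  apply sup_le
  · exact le_trans (hanti (Nat.zero_le k) ω) (le_trans (hb0 ω)
      (EReal.coe_le_coe_iff.2 (le_max_left _ _)))
  · exact_mod_cast le_trans (neg_nonpos.2 (Nat.cast_nonneg k)) (le_max_right B0 0)

lemma cutval_toReal_bounds (hb0 : ∀ ω, fn 0 ω ≤ (B0 : EReal)) (hanti : Antitone fn)
    (k : ℕ) (ω : Path X) :
    -(k : ℝ) ≤ (fn k ω ⊔ (-(k : ℝ) : EReal)).toReal ∧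
      (fn k ω ⊔ (-(k : ℝ) : EReal)).toReal ≤ max B0 0 := by
  have hnb := cutval_ne_bot (fn := fn) k ω
  have hnt : fn k ω ⊔ (-(k : ℝ) : EReal) ≠ ⊤ :=
    ne_top_of_le_ne_top (EReal.coe_ne_top _) (cutval_le_D hb0 hanti k ω)
  constructor
  · have := EReal.toReal_le_toReal (le_sup_right :
      ((-(k : ℝ) : ℝ) : EReal) ≤ fn k ω ⊔ (-(k : ℝ) : EReal)) (EReal.coe_ne_bot _) hnt
    rw [EReal.toReal_coe] at this
    exact this
  · have := EReal.toReal_le_toReal (cutval_le_D hb0 hanti k ω) hnb (by simp)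
    simpa using this

lemma Hr_nonempty (k : ℕ) (t : List X) :
    ((fun ω => (fn k ω ⊔ (-(k : ℝ) : EReal)).toReal) '' cyl t).Nonempty :=
  ⟨_, ⟨pext t, pext_mem_cyl t, rfl⟩⟩

lemma Hr_bddAbove (hb0 : ∀ ω, fn 0 ω ≤ (B0 : EReal)) (hanti : Antitone fn) (k : ℕ) (t : List X) :
    BddAbove ((fun ω => (fn k ω ⊔ (-(k : ℝ) : EReal)).toReal) '' cyl t) := by
  refine ⟨max B0 0, ?_⟩
  rintro x ⟨ω, hω, rfl⟩
  exact (cutval_toReal_bounds hb0 hanti k ω).2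

lemma Hr_bounds (hb0 : ∀ ω, fn 0 ω ≤ (B0 : EReal)) (hanti : Antitone fn) (k : ℕ) (t : List X) :
    -(k : ℝ) ≤ Hr fn k t ∧ Hr fn k t ≤ max B0 0 := by
  constructor
  · exact le_trans (cutval_toReal_bounds hb0 hanti k (pext t)).1
      (le_csSup (Hr_bddAbove hb0 hanti k t) ⟨pext t, pext_mem_cyl t, rfl⟩)
  · apply csSup_le (Hr_nonempty k t)
    rintro x ⟨ω, hω, rfl⟩
    exact (cutval_toReal_bounds hb0 hanti k ω).2

lemma cutval_le_Hr (hb0 : ∀ ω, fn 0 ω ≤ (B0 : EReal)) (hanti : Antitone fn)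
    {k : ℕ} {t : List X} {ω : Path X} (hω : ω ∈ cyl t) :
    fn k ω ⊔ (-(k : ℝ) : EReal) ≤ ((Hr fn k t : ℝ) : EReal) := by
  have hnb := cutval_ne_bot (fn := fn) k ω
  have hnt : fn k ω ⊔ (-(k : ℝ) : EReal) ≠ ⊤ :=
    ne_top_of_le_ne_top (EReal.coe_ne_top _) (cutval_le_D hb0 hanti k ω)
  rw [← EReal.coe_toReal hnt hnb]
  exact EReal.coe_le_coe_iff.2 (le_csSup (Hr_bddAbove hb0 hanti k t) ⟨ω, hω, rfl⟩)

lemma le_Hr (hb0 : ∀ ω, fn 0 ω ≤ (B0 : EReal)) (hanti : Antitone fn) (k : ℕ) (ω : Path X) :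
    fn k ω ≤ ((Hr fn k (prefixList ω k) : ℝ) : EReal) :=
  le_trans le_sup_left (cutval_le_Hr hb0 hanti (mem_cyl_prefixList ω k))

lemma Hr_antitone (hb0 : ∀ ω, fn 0 ω ≤ (B0 : EReal)) (hanti : Antitone fn)
    {k m : ℕ} (hkm : k ≤ m) (ω : Path X) :
    Hr fn m (prefixList ω m) ≤ Hr fn k (prefixList ω k) := by
  apply csSup_le (Hr_nonempty m _)
  rintro x ⟨ω', hω', rfl⟩
  have h1 : fn m ω' ⊔ (-(m : ℝ) : EReal) ≤ fn k ω' ⊔ (-(k : ℝ) : EReal) := by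
    apply sup_le
    · exact le_trans (hanti hkm ω') le_sup_left
    · exact le_trans (by exact_mod_cast (neg_le_neg (Nat.cast_le.2 hkm) : -(m:ℝ) ≤ -(k:ℝ)))
        le_sup_right
  have h2 := EReal.toReal_le_toReal h1 (cutval_ne_bot m ω')
    (ne_top_of_le_ne_top (EReal.coe_ne_top _) (cutval_le_D hb0 hanti k ω'))
  refine le_trans h2 ?_
  have hω'' : ω' ∈ cyl (prefixList ω k) := cyl_prefix_antitone ω hkm hω'
  exact le_csSup (Hr_bddAbove hb0 hanti k _) ⟨ω', hω'', rfl⟩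

/-- pointwise convergence of the approximations to `f`. -/
lemma Hr_iInf [TopologicalSpace X] [DiscreteTopology X]
    (hb0 : ∀ ω, fn 0 ω ≤ (B0 : EReal)) (hanti : Antitone fn)
    (husc : ∀ n, USC (fn n))
    (hlim : ∀ ω, Tendsto (fun n => fn n ω) atTop (nhds (f ω))) (ω : Path X) :
    (⨅ k, ((Hr fn k (prefixList ω k) : ℝ) : EReal)) = f ω := by
  have hf : ∀ ω, f ω = ⨅ n, fn n ω := by
    intro ω
    have h1 : Tendsto (fun n => fn n ω) atTop (nhds (⨅ n, fn n ω)) :=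
      tendsto_atTop_iInf (fun n m h => hanti h ω)
    exact tendsto_nhds_unique (hlim ω) h1
  apply le_antisymm
  · apply ereal_le_of_forall_real_gt
    intro a ha
    have hev : ∀ᶠ n in atTop, fn n ω < (a : EReal) :=
      Tendsto.eventually_lt_const ha (hlim ω)
    obtain ⟨n, hn⟩ := hev.exists
    obtain ⟨m₀, hm₀⟩ := exists_cyl_subset (husc n a) hn
    set k := max (max n m₀) (Nat.ceil (-a)) with hk
    have hka : -(k : ℝ) ≤ a := by
      have h1 : ((Nat.ceil (-a) : ℕ) : ℝ) ≥ -a := Nat.le_ceil _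
      have h2 : ((Nat.ceil (-a) : ℕ) : ℝ) ≤ (k : ℝ) := Nat.cast_le.2 (le_max_right _ _)
      linarith
    have hHra : Hr fn k (prefixList ω k) ≤ a := by
      apply csSup_le (Hr_nonempty k _)
      rintro x ⟨ω', hω', rfl⟩
      have hpref : prefixList ω' m₀ = prefixList ω m₀ := by
        rw [mem_cyl, prefixList_length] at hω'
        exact prefixList_congr (le_trans (le_max_right n m₀) (le_max_left _ _)) hω'
      have hω'O : fn n ω' < (a : EReal) := hm₀ ω' hpref
      have hfk : fn k ω' ≤ fn n ω' := hanti (le_trans (le_max_left n m₀) (le_max_left _ _)) ω'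
      have hle : fn k ω' ⊔ (-(k : ℝ) : EReal) ≤ (a : EReal) :=
        sup_le (le_of_lt (lt_of_le_of_lt hfk hω'O)) (by exact_mod_cast hka)
      have := EReal.toReal_le_toReal hle (cutval_ne_bot k ω') (by simp)
      simpa using this
    exact le_trans (iInf_le _ k) (EReal.coe_le_coe_iff.2 hHra)
  · rw [hf ω]
    apply le_iInf
    intro k
    exact le_trans (iInf_le _ k) (le_Hr hb0 hanti k ω)

end Seq


/-! ### the game-theoretic side -/

section Game
variable [TopologicalSpace X] [DiscreteTopology X]
variable {fn : ℕ → Path X → EReal} {f : Path X → EReal} {B0 : ℝ}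

lemma f_le_fn (hanti : Antitone fn)
    (hlim : ∀ ω, Tendsto (fun n => fn n ω) atTop (nhds (f ω))) (n : ℕ) (ω : Path X) :
    f ω ≤ fn n ω := by
  have h1 : Tendsto (fun n => fn n ω) atTop (nhds (⨅ n, fn n ω)) :=
    tendsto_atTop_iInf (fun n m h => hanti h ω)
  rw [tendsto_nhds_unique (hlim ω) h1]
  exact iInf_le _ n

/-- list version of `Hr`, via the canonical extension. -/
noncomputable def HrL (fn : ℕ → Path X → EReal) (k : ℕ) (t : List X) : ℝ :=
  Hr fn k (prefixList (pext t) k)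

lemma HrL_take {k j : ℕ} {t : List X} (hkj : k ≤ j) (hjt : j ≤ t.length) :
    HrL fn k (t.take j) = HrL fn k t := by
  unfold HrL
  congr 1
  rw [prefixList_pext (le_trans hkj (by simpa using hjt)), prefixList_pext (le_trans hkj hjt),
    List.take_take]
  congr 1
  omega

lemma HrL_append {m : ℕ} {t : List X} (x : X) (h : m ≤ t.length) :
    HrL fn m (t ++ [x]) = HrL fn m t := by
  unfold HrL
  congr 1
  rw [prefixList_pext (le_trans h (by simp)), prefixList_pext h,
    List.take_append_of_le_length h]

/-- Core inequality on the game-theoretic side. -/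
lemma game_core (Q : UpperExpTree X) (s : List X)
    (hb0 : ∀ ω, fn 0 ω ≤ (B0 : EReal)) (hanti : Antitone fn) (husc : ∀ n, USC (fn n))
    (hlim : ∀ ω, Tendsto (fun n => fn n ω) atTop (nhds (f ω))) :
    (⨅ n, gtUE Q (fn n) s) ≤ gtUE Q f s := by
  classical
  set D : ℝ := max B0 0 with hD
  have hfub : ∀ ω, f ω ≤ (B0 : EReal) := fun ω => le_trans (f_le_fn hanti hlim 0 ω) (hb0 ω)
  have hfubD : ∀ ω, f ω ≤ (D : EReal) :=
    fun ω => le_trans (hfub ω) (EReal.coe_le_coe_iff.2 (le_max_left _ _))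
  refine le_trans ?_ (gtUE_ge_iInf_gtG Q hfubD s)
  apply le_iInf
  intro c'
  -- the function (f ⊔ c').toReal is the target of gtG
  apply le_sInf
  rintro a ⟨M, hSM, hMB, hMlim, rfl⟩
  apply ereal_le_add_of_forall_pos
  intro ε hε
  -- the stopping predicate
  set Stop : List X → Prop :=
    fun t => s.length ≤ t.length ∧ ∃ k ≤ t.length, HrL fn k t ≤ M t + ε with hStop
  -- every path in the cylinder eventually stops
  have hstops : ∀ ω ∈ cyl s, ∃ j, Stop (prefixList ω j) := by
    intro ω hω
    set v : ℝ := (f ω ⊔ (c' : EReal)).toReal with hv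
    have hfc : f ω ⊔ (c' : EReal) = (v : EReal) := by
      rw [hv, EReal.coe_toReal]
      · exact ne_top_of_le_ne_top (EReal.coe_ne_top (max D c'))
          (sup_le (le_trans (hfubD ω) (by exact_mod_cast le_max_left D c'))
            (by exact_mod_cast le_max_right D c'))
      · intro hbeq
        have : (c' : EReal) ≤ (⊥ : EReal) := hbeq ▸ le_sup_right
        exact absurd this (by simp)
    -- find k with Hr close to f
    have hiInf : (⨅ k, ((Hr fn k (prefixList ω k) : ℝ) : EReal)) = f ω :=
      Hr_iInf hb0 hanti husc hlim ω
    have hlt : (⨅ k, ((Hr fn k (prefixList ω k) : ℝ) : EReal)) < ((v + ε/2 : ℝ) : EReal) := by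
      rw [hiInf]
      calc f ω ≤ f ω ⊔ (c' : EReal) := le_sup_left
      _ = (v : EReal) := hfc
      _ < ((v + ε/2 : ℝ) : EReal) := by exact_mod_cast (by linarith : v < v + ε/2)
    obtain ⟨k, hk⟩ := iInf_lt_iff.1 hlt
    have hkreal : Hr fn k (prefixList ω k) < v + ε/2 := by exact_mod_cast hk
    -- eventually M exceeds Hr - ε/2
    have hblt : ((Hr fn k (prefixList ω k) - ε/2 : ℝ) : EReal)
        < liminf (fun i => ((M (prefixList ω i) : ℝ) : EReal)) atTop := by
      apply lt_of_lt_of_le _ (hMlim ω hω)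
      rw [← hfc]
      rw [hfc]
      exact_mod_cast (by linarith : Hr fn k (prefixList ω k) - ε/2 < v)
    have hev := eventually_lt_of_lt_liminf hblt
    obtain ⟨i, hik, hi⟩ := (hev.and (eventually_ge_atTop (max k s.length))).exists
    refine ⟨i, ?_, k, by rw [prefixList_length]; exact le_trans (le_max_left _ _) hi, ?_⟩
    · rw [prefixList_length]
      exact le_trans (le_max_right _ _) hi
    · have heq : HrL fn k (prefixList ω i) = Hr fn k (prefixList ω k) := by
        unfold HrL
        congr 1
        have h1 : prefixList (pext (prefixList ω i)) k = prefixList ω k :=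
          prefixList_pext_prefixList ω (le_trans (le_max_left _ _) hi)
        rw [h1]
      rw [heq]
      have : Hr fn k (prefixList ω k) - ε/2 < M (prefixList ω i) := by exact_mod_cast hik
      linarith
  -- uniform stopping depth
  obtain ⟨m, hms, hm⟩ := exists_uniform_depth s Stop hstops
  -- the frozen process
  set W : List X → ℝ := fun t =>
    if h : ∃ j, s.length ≤ j ∧ j ≤ t.length ∧ Stop (t.take j) then M (t.take (Nat.find h))
    else M t with hW
  have hWs : W s = M s := by
    rw [hW]
    by_cases h : ∃ j, s.length ≤ j ∧ j ≤ s.length ∧ Stop (s.take j)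
    · simp only [dif_pos h]
      obtain ⟨hj1, hj2, _⟩ := Nat.find_spec h
      have : Nat.find h = s.length := le_antisymm hj2 hj1
      rw [this, List.take_length]
    · simp only [dif_neg h]
  -- child behaviour of W
  have hWc : ∀ t : List X, s.length ≤ t.length → ∀ x : X,
      ((∃ j, s.length ≤ j ∧ j ≤ t.length ∧ Stop (t.take j)) → W (t ++ [x]) = W t) ∧
      (¬(∃ j, s.length ≤ j ∧ j ≤ t.length ∧ Stop (t.take j)) → W (t ++ [x]) = M (t ++ [x])) := by
    intro t hts x
    constructor
    · intro h
      have h' : ∃ j, s.length ≤ j ∧ j ≤ (t ++ [x]).length ∧ Stop ((t ++ [x]).take j) := by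
        obtain ⟨j, hj1, hj2, hj3⟩ := h
        refine ⟨j, hj1, ?_, by rwa [List.take_append_of_le_length hj2]⟩
        simp only [List.length_append, List.length_cons, List.length_nil]
        omega
      have hfind : Nat.find h' = Nat.find h := by
        apply le_antisymm
        · obtain ⟨hj1, hj2, hj3⟩ := Nat.find_spec h
          have hlen' : Nat.find h ≤ (t ++ [x]).length := by
            simp only [List.length_append, List.length_cons, List.length_nil]
            omega
          exact Nat.find_le ⟨hj1, hlen', by rwa [List.take_append_of_le_length hj2]⟩
        · by_contra hcon
          push_neg at hcon
          obtain ⟨hj1, hj2, hj3⟩ := Nat.find_spec h'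
          have hle : Nat.find h' ≤ t.length := by
            have h2 : Nat.find h ≤ t.length := (Nat.find_spec h).2.1
            omega
          rw [List.take_append_of_le_length hle] at hj3
          exact Nat.find_min h hcon ⟨hj1, hle, hj3⟩
      rw [hW]
      simp only [dif_pos h, dif_pos h']
      rw [hfind]
      rw [List.take_append_of_le_length]
      exact le_trans (Nat.find_spec h).2.1 le_rfl
    · intro h
      rw [hW]
      by_cases h' : ∃ j, s.length ≤ j ∧ j ≤ (t ++ [x]).length ∧ Stop ((t ++ [x]).take j)
      · simp only [dif_pos h']
        obtain ⟨hj1, hj2, hj3⟩ := Nat.find_spec h'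
        have hlen : Nat.find h' = t.length + 1 := by
          rcases Nat.lt_or_ge (Nat.find h') (t.length + 1) with hlt | hge
          · exfalso
            have hle : Nat.find h' ≤ t.length := by omega
            rw [List.take_append_of_le_length hle] at hj3
            exact h ⟨Nat.find h', hj1, hle, hj3⟩
          · have : (t ++ [x]).length = t.length + 1 := by simp
            omega
        rw [hlen]
        have : (t ++ [x]).take (t.length + 1) = t ++ [x] := by
          have : (t ++ [x]).length = t.length + 1 := by simp
          rw [← this, List.take_length]
        rw [this]
      · simp only [dif_neg h']
  -- terminal bound for W at depth m
  have hWterm : ∀ t : List X, s <+: t → t.length = m → HrL fn m t ≤ W t + ε := by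
    intro t hst htm
    have hstopped : ∃ j, s.length ≤ j ∧ j ≤ t.length ∧ Stop (t.take j) := by
      have hmem : pext t ∈ cyl s := pext_mem_cyl_of_prefix hst
      obtain ⟨j, hjm, hstop⟩ := hm (pext t) hmem
      have hpj : prefixList (pext t) j = t.take j := prefixList_pext (by omega)
      rw [hpj] at hstop
      have hjlen : s.length ≤ j := by
        have := hstop.1
        rwa [List.length_take, min_eq_left (by omega)] at this
      exact ⟨j, hjlen, by omega, hstop⟩
    obtain ⟨hj1, hj2, hj3⟩ := Nat.find_spec hstopped
    obtain ⟨hlen0, k, hk, hHrk⟩ := hj3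
    have hklen : k ≤ Nat.find hstopped := by
      have h2 : (t.take (Nat.find hstopped)).length = Nat.find hstopped := by
        rw [List.length_take]; omega
      omega
    have heq : HrL fn k (t.take (Nat.find hstopped)) = HrL fn k t := HrL_take hklen hj2
    rw [heq] at hHrk
    have hanti' : HrL fn m t ≤ HrL fn k t := by
      unfold HrL
      exact Hr_antitone hb0 hanti (by omega) (pext t)
    have hWt : W t = M (t.take (Nat.find hstopped)) := by
      rw [hW]; simp only [dif_pos hstopped]
    rw [hWt]
    linarith
  -- backward induction
  set gm : List X → ℝ := fun t => HrL fn m t with hgm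
  have hind : ∀ n (t : List X), s <+: t → t.length + n = m → go Q gm n t ≤ W t + ε := by
    intro n
    induction n with
    | zero =>
      intro t hst htm
      have h0 : go Q gm 0 t = gm t := rfl
      rw [h0]
      exact hWterm t hst (by omega)
    | succ n ih =>
      intro t hst htm
      have hts : s.length ≤ t.length := hst.length_le
      have hchild : ∀ x : X, go Q gm n (t ++ [x]) ≤ W (t ++ [x]) + ε := by
        intro x
        refine ih (t ++ [x]) (hst.trans (List.prefix_append t [x])) ?_
        simp only [List.length_append, List.length_cons, List.length_nil]
        omega
      have h1 : Q.Q t (fun x => go Q gm n (t ++ [x])) ≤ Q.Q t (fun x => W (t ++ [x]) + ε) :=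
        Q_mono Q t hchild
      have h2 : Q.Q t (fun x => W (t ++ [x]) + ε) ≤ Q.Q t (fun x => W (t ++ [x])) + ε :=
        Q_add_const Q t _ ε
      have h3 : Q.Q t (fun x => W (t ++ [x])) ≤ W t := by
        by_cases hstp : ∃ j, s.length ≤ j ∧ j ≤ t.length ∧ Stop (t.take j)
        · have heqW : ∀ x : X, W (t ++ [x]) = W t := fun x => ((hWc t hts x).1 hstp)
          calc Q.Q t (fun x => W (t ++ [x])) = Q.Q t (fun _ => W t) := by
                congr 1; funext x; rw [heqW x]
          _ ≤ W t := le_of_eq (Q_const Q t _)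
        · have hWt : W t = M t := by rw [hW]; simp only [dif_neg hstp]
          have heqW : ∀ x : X, W (t ++ [x]) = M (t ++ [x]) := fun x => ((hWc t hts x).2 hstp)
          calc Q.Q t (fun x => W (t ++ [x])) = Q.Q t (fun x => M (t ++ [x])) := by
                congr 1; funext x; rw [heqW x]
          _ ≤ M t := hSM t
          _ = W t := hWt.symm
      show go Q gm (n+1) t ≤ W t + ε
      calc go Q gm (n+1) t = Q.Q t (fun x => go Q gm n (t ++ [x])) := rfl
      _ ≤ W t + ε := le_trans h1 (le_trans h2 (by linarith))
  have hgoal : go Q gm (m - s.length) s ≤ M s + ε := by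
    have := hind (m - s.length) s (List.prefix_refl s) (by omega)
    rwa [hWs] at this
  -- assembling the chain
  have hchain1 : (⨅ n, gtUE Q (fn n) s)
      ≤ gtUE Q (fun ω => ((Hr fn m (prefixList ω m) : ℝ) : EReal)) s := by
    refine le_trans (iInf_le _ m) (gtUE_mono Q ?_ s)
    exact fun ω => le_Hr hb0 hanti m ω
  have hchain2 : gtUE Q (fun ω => ((Hr fn m (prefixList ω m) : ℝ) : EReal)) s
      ≤ gtG Q (fun ω => Hr fn m (prefixList ω m)) s := by
    have hb' : ∀ ω : Path X, ((-(m:ℝ) : ℝ) : EReal) ≤ ((Hr fn m (prefixList ω m) : ℝ) : EReal) :=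
      fun ω => EReal.coe_le_coe_iff.2 (Hr_bounds hb0 hanti m _).1
    have hub' : ∀ ω : Path X, ((Hr fn m (prefixList ω m) : ℝ) : EReal) ≤ (D : EReal) :=
      fun ω => EReal.coe_le_coe_iff.2 (Hr_bounds hb0 hanti m _).2
    have hres := gtUE_le_gtG_of_bounded Q hb' hub' s
    simpa [EReal.toReal_coe] using hres
  have hchain3 : gtG Q (fun ω => Hr fn m (prefixList ω m)) s ≤ ((goM Q gm m s : ℝ) : EReal) := by
    have heqf : (fun ω : Path X => Hr fn m (prefixList ω m)) = (fun ω => gm (prefixList ω m)) := by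
      funext ω
      rw [hgm]
      show Hr fn m (prefixList ω m) = HrL fn m (prefixList ω m)
      unfold HrL
      rw [prefixList_pext_prefixList ω (le_refl m)]
    rw [heqf]
    apply gtG_le_goM Q gm m (lo := -(m:ℝ)) (hi := D)
    · intro t
      exact ⟨(Hr_bounds hb0 hanti m _).1, (Hr_bounds hb0 hanti m _).2⟩
    · intro t x h
      exact HrL_append x h
  have hgoM : goM Q gm m s = go Q gm (m - s.length) s := rfl
  calc (⨅ n, gtUE Q (fn n) s) ≤ ((goM Q gm m s : ℝ) : EReal) :=
        le_trans hchain1 (le_trans hchain2 hchain3)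
  _ ≤ ((M s + ε : ℝ) : EReal) := by
      rw [hgoM]; exact_mod_cast hgoal
  _ = ((M s : ℝ) : EReal) + (ε : EReal) := by rw [EReal.coe_add]

end Game


/-! ### measure-theoretic side: preliminaries -/

lemma posPart_coe (r : ℝ) : posPart ((r : ℝ) : EReal) = ENNReal.ofReal r := by
  unfold posPart
  rw [if_neg (EReal.coe_ne_top r), EReal.toReal_coe]

lemma posPart_mono : Monotone posPart := by
  intro x y h
  unfold posPart
  by_cases hy : y = ⊤
  · rw [if_pos hy]
    exact le_top
  · rw [if_neg hy]
    have hx : x ≠ ⊤ := fun hx => hy (top_le_iff.1 (hx ▸ h))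
    rw [if_neg hx]
    by_cases hb : x = ⊥
    · rw [hb]
      simp only [EReal.toReal_bot, ENNReal.ofReal_zero, zero_le]
    · exact ENNReal.ofReal_le_ofReal (EReal.toReal_le_toReal h hb hy)

lemma posPart_eq_zero_of_nonpos {x : EReal} (h : x ≤ 0) : posPart x = 0 := by
  unfold posPart
  rw [if_neg (by rintro rfl; exact absurd h (by simp))]
  exact ENNReal.ofReal_of_nonpos (by
    rcases eq_or_ne x ⊥ with rfl | hb
    · simp
    · simpa using EReal.toReal_le_toReal h hb (by simp))

lemma measurable_posPart : Measurable posPart := by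
  unfold posPart
  exact Measurable.ite (measurableSet_singleton ⊤) measurable_const
    (ENNReal.measurable_ofReal.comp measurable_ereal_toReal)

lemma integralE_mono (μ : Measure (Path X)) {g h : Path X → EReal} (hle : ∀ ω, g ω ≤ h ω) :
    integralE μ g ≤ integralE μ h := by
  unfold integralE
  refine EReal.sub_le_sub ?_ ?_
  · exact EReal.coe_ennreal_le_coe_ennreal_iff.2
      (lintegral_mono fun ω => posPart_mono (hle ω))
  · exact EReal.coe_ennreal_le_coe_ennreal_iff.2
      (lintegral_mono fun ω => posPart_mono (EReal.neg_le_neg_iff.2 (hle ω)))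

lemma upperInt_eq {μ : Measure (Path X)} {h : Path X → EReal} (hmeas : Measurable h)
    {B : ℝ} (hB : ∀ ω, (B : EReal) ≤ h ω) : upperInt μ h = integralE μ h := by
  apply le_antisymm
  · exact sInf_le ⟨h, hmeas, ⟨B, hB⟩, fun ω => le_rfl, rfl⟩
  · apply le_sInf
    rintro a ⟨g, hg, hBg, hfg, rfl⟩
    exact integralE_mono μ hfg

lemma integralE_le_upperInt (μ : Measure (Path X)) (f : Path X → EReal) :
    integralE μ f ≤ upperInt μ f := by
  apply le_sInf
  rintro a ⟨g, hg, hBg, hfg, rfl⟩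
  exact integralE_mono μ hfg

lemma coe_ennreal_eq {x : ℝ≥0∞} (hx : x ≠ ⊤) : (x : EReal) = ((x.toReal : ℝ) : EReal) := by
  rw [← EReal.toReal_coe_ennreal]
  exact (EReal.coe_toReal (by simp [EReal.coe_ennreal_eq_top_iff, hx]) (EReal.coe_ennreal_ne_bot x)).symm

lemma ereal_neg_iInf (x : ℕ → EReal) : -(⨅ j, x j) = ⨆ j, -(x j) := by
  apply le_antisymm
  · rw [EReal.neg_le]
    apply le_iInf
    intro j
    have h1 : -(x j) ≤ ⨆ j, -(x j) := le_iSup (fun j => -(x j)) j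
    have := EReal.neg_le_neg_iff.2 h1
    simpa using this
  · apply iSup_le
    intro j
    exact EReal.neg_le_neg_iff.2 (iInf_le _ j)


/-! ### the finite-dimensional integral formula -/

/-- The expectation of the `j`-step finitary variable `g` as an explicit polynomial in the
transition probabilities. -/
noncomputable def Phi (q : List X → X → ℝ) (s : List X) (g : List X → ℝ) (j : ℕ) : ℝ :=
  ∑ v : Fin j → X, g (List.ofFn v) * cylProb q s (List.ofFn v)

lemma lintegral_prefix (μ : Measure (Path X)) (G : List X → ℝ≥0∞) (j : ℕ) :
    ∫⁻ ω, G (prefixList ω j) ∂μ = ∑ v : Fin j → X, G (List.ofFn v) * μ (cyl (List.ofFn v)) := by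
  have hpt : ∀ ω : Path X, G (prefixList ω j)
      = ∑ v : Fin j → X, (cyl (List.ofFn v)).indicator (fun _ => G (List.ofFn v)) ω := by
    intro ω
    rw [Finset.sum_eq_single (fun i : Fin j => ω i)]
    · have hmem : ω ∈ cyl (List.ofFn fun i : Fin j => ω i) := by
        rw [mem_cyl_iff_getElem]
        intro i h
        rw [List.getElem_ofFn]
      rw [Set.indicator_of_mem hmem]
      congr 1
      apply List.ext_getElem (by simp)
      intro i h1 h2
      rw [List.getElem_ofFn]
      exact prefixList_getElem ω (by simpa using h1)
    · intro v _ hne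
      apply Set.indicator_of_notMem
      intro hmem
      apply hne
      funext i
      rw [mem_cyl_iff_getElem] at hmem
      have h := hmem (i : ℕ) (by simp)
      rw [List.getElem_ofFn] at h
      simpa using h.symm
    · intro h
      exact absurd (Finset.mem_univ _) h
  calc ∫⁻ ω, G (prefixList ω j) ∂μ
      = ∫⁻ ω, ∑ v : Fin j → X, (cyl (List.ofFn v)).indicator (fun _ => G (List.ofFn v)) ω ∂μ :=
        lintegral_congr hpt
  _ = ∑ v : Fin j → X, ∫⁻ ω, (cyl (List.ofFn v)).indicator (fun _ => G (List.ofFn v)) ω ∂μ :=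
        lintegral_finset_sum _ (fun v _ => measurable_const.indicator (measurableSet_cyl _))
  _ = ∑ v : Fin j → X, G (List.ofFn v) * μ (cyl (List.ofFn v)) := by
        apply Finset.sum_congr rfl
        intro v _
        rw [lintegral_indicator (measurableSet_cyl _), setLIntegral_const]

lemma cylProb_nonneg (p : PreciseTree X) (s z : List X) : 0 ≤ cylProb p.p s z := by
  unfold cylProb
  split_ifs
  · exact Finset.prod_nonneg fun i _ => p.nonneg _ _
  · exact zero_le_one
  · exact le_rfl

lemma max_sub_max_neg (a : ℝ) : max a 0 - max (-a) 0 = a := by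
  rcases le_total a 0 with h | h
  · rw [max_eq_right h, max_eq_left (by linarith)]
    ring
  · rw [max_eq_left h, max_eq_right (by linarith)]
    ring

lemma integralE_prefix (p : PreciseTree X) (s : List X) {μ : Measure (Path X)}
    (hμ : IsTreeMeasure p s μ) (g : List X → ℝ) (j : ℕ) :
    integralE μ (fun ω => ((g (prefixList ω j) : ℝ) : EReal))
      = ((Phi p.p s g j : ℝ) : EReal) := by
  unfold integralE
  have key : ∀ h : List X → ℝ,
      (∑ v : Fin j → X, ENNReal.ofReal (h (List.ofFn v)) * μ (cyl (List.ofFn v)))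
        = ENNReal.ofReal
            (∑ v : Fin j → X, max (h (List.ofFn v)) 0 * cylProb p.p s (List.ofFn v)) := by
    intro h
    rw [ENNReal.ofReal_sum_of_nonneg
      (fun v _ => mul_nonneg (le_max_right _ _) (cylProb_nonneg p s _))]
    apply Finset.sum_congr rfl
    intro v _
    have hofr : ENNReal.ofReal (h (List.ofFn v)) = ENNReal.ofReal (max (h (List.ofFn v)) 0) := by
      rcases le_total (h (List.ofFn v)) 0 with hc | hc
      · rw [ENNReal.ofReal_of_nonpos hc, max_eq_right hc, ENNReal.ofReal_zero]
      · rw [max_eq_left hc]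
    rw [hμ.2, hofr, ← ENNReal.ofReal_mul (le_max_right _ _)]
  have h1 : (∫⁻ ω, posPart ((g (prefixList ω j) : ℝ) : EReal) ∂μ)
      = ENNReal.ofReal
          (∑ v : Fin j → X, max (g (List.ofFn v)) 0 * cylProb p.p s (List.ofFn v)) := by
    have heq : (fun ω : Path X => posPart ((g (prefixList ω j) : ℝ) : EReal))
        = fun ω => (fun t => ENNReal.ofReal (g t)) (prefixList ω j) := by
      funext ω
      rw [posPart_coe]
    rw [lintegral_congr (fun ω => congrFun heq ω)]
    exact (lintegral_prefix μ (fun t => ENNReal.ofReal (g t)) j).trans (key _)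
  have h2 : (∫⁻ ω, posPart (-((g (prefixList ω j) : ℝ) : EReal)) ∂μ)
      = ENNReal.ofReal
          (∑ v : Fin j → X, max (-(g (List.ofFn v))) 0 * cylProb p.p s (List.ofFn v)) := by
    have heq : (fun ω : Path X => posPart (-((g (prefixList ω j) : ℝ) : EReal)))
        = fun ω => (fun t => ENNReal.ofReal (-(g t))) (prefixList ω j) := by
      funext ω
      rw [← EReal.coe_neg, posPart_coe]
    rw [lintegral_congr (fun ω => congrFun heq ω)]
    exact (lintegral_prefix μ (fun t => ENNReal.ofReal (-(g t))) j).trans (key (fun t => -(g t)))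
  rw [h1, h2]
  have hSp : (0:ℝ) ≤ ∑ v : Fin j → X, max (g (List.ofFn v)) 0 * cylProb p.p s (List.ofFn v) :=
    Finset.sum_nonneg fun v _ => mul_nonneg (le_max_right _ _) (cylProb_nonneg p s _)
  have hSn : (0:ℝ) ≤ ∑ v : Fin j → X, max (-(g (List.ofFn v))) 0 * cylProb p.p s (List.ofFn v) :=
    Finset.sum_nonneg fun v _ => mul_nonneg (le_max_right _ _) (cylProb_nonneg p s _)
  rw [EReal.coe_ennreal_ofReal, EReal.coe_ennreal_ofReal, sup_eq_left.2 hSp, sup_eq_left.2 hSn,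
    ← EReal.coe_sub]
  congr 1
  unfold Phi
  rw [← Finset.sum_sub_distrib]
  apply Finset.sum_congr rfl
  intro v _
  rw [← sub_mul, max_sub_max_neg]

lemma continuous_Phi (s : List X) (g : List X → ℝ) (j : ℕ) :
    Continuous fun q : List X → X → ℝ => Phi q s g j := by
  unfold Phi
  apply continuous_finset_sum
  intro v _
  apply Continuous.mul continuous_const
  simp only [cylProb]
  split_ifs with hc1 hc2
  · apply continuous_finset_prod
    intro i _
    exact (continuous_apply _).comp (continuous_apply _)
  · exact continuous_const
  · exact continuous_const


/-! ### downward convergence of the integral -/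

lemma posPart_top : posPart ⊤ = ⊤ := by
  unfold posPart
  rw [if_pos rfl]

lemma posPart_iInf {x : ℕ → EReal} {D : ℝ} (hub : ∀ j, x j ≤ (D : EReal)) :
    (⨅ j, posPart (x j)) = posPart (⨅ j, x j) := by
  apply le_antisymm
  · have hynetop : (⨅ j, x j) ≠ ⊤ :=
      ne_top_of_le_ne_top (EReal.coe_ne_top D) (le_trans (iInf_le _ 0) (hub 0))
    rcases eq_or_ne (⨅ j, x j) ⊥ with hybot | hyne
    · have hlt : (⨅ j, x j) < (0 : EReal) := by
        rw [hybot]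
        exact bot_lt_iff_ne_bot.2 (by simp)
      obtain ⟨j, hj⟩ := iInf_lt_iff.1 hlt
      have h0 : posPart (x j) = 0 := posPart_eq_zero_of_nonpos (le_of_lt hj)
      exact le_trans (iInf_le _ j) (by rw [h0]; exact zero_le)
    · have hyr : (⨅ j, x j) = (((⨅ j, x j).toReal : ℝ) : EReal) :=
        (EReal.coe_toReal hynetop hyne).symm
      rw [hyr, posPart_coe]
      apply ENNReal.le_of_forall_pos_le_add
      intro ε hε _
      have hlt : (⨅ j, x j) < (((⨅ j, x j).toReal + (ε : ℝ) : ℝ) : EReal) := by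
        conv_lhs => rw [hyr]
        exact_mod_cast lt_add_of_pos_right _ (by exact_mod_cast hε)
      obtain ⟨j, hj⟩ := iInf_lt_iff.1 hlt
      calc (⨅ j, posPart (x j)) ≤ posPart (x j) := iInf_le _ j
      _ ≤ posPart ((((⨅ j, x j).toReal + (ε : ℝ) : ℝ)) : EReal) := posPart_mono (le_of_lt hj)
      _ = ENNReal.ofReal ((⨅ j, x j).toReal + (ε : ℝ)) := posPart_coe _
      _ ≤ ENNReal.ofReal ((⨅ j, x j).toReal) + ENNReal.ofReal (ε : ℝ) := ENNReal.ofReal_add_le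
      _ = ENNReal.ofReal ((⨅ j, x j).toReal) + ε := by rw [ENNReal.ofReal_coe_nnreal]
  · exact le_iInf fun j => posPart_mono (iInf_le _ j)

lemma posPart_neg_iInf {x : ℕ → EReal} {D : ℝ} (hub : ∀ j, x j ≤ (D : EReal)) :
    (⨆ j, posPart (-(x j))) = posPart (-(⨅ j, x j)) := by
  rw [ereal_neg_iInf]
  apply le_antisymm
  · exact iSup_le fun j => posPart_mono (le_iSup (fun j => -(x j)) j)
  · rcases eq_or_ne (⨆ j, -(x j)) ⊤ with hwt | hwt
    · rw [hwt, posPart_top, top_le_iff]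
      by_contra hne
      obtain ⟨n, hn⟩ := exists_nat_gt ((⨆ j, posPart (-(x j))).toReal)
      have h1 : ((n : ℝ) : EReal) < ⨆ j, -(x j) := by
        rw [hwt]
        exact EReal.coe_lt_top _
      obtain ⟨j, hj⟩ := lt_iSup_iff.1 h1
      have h2 : ENNReal.ofReal (n : ℝ) ≤ posPart (-(x j)) := by
        rw [← posPart_coe]
        exact posPart_mono (le_of_lt hj)
      have h3 : ENNReal.ofReal (n : ℝ) ≤ ⨆ j, posPart (-(x j)) :=
        le_trans h2 (le_iSup (fun j => posPart (-(x j))) j)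
      have h4 : (n : ℝ) ≤ (⨆ j, posPart (-(x j))).toReal :=
        (ENNReal.ofReal_le_iff_le_toReal hne).1 h3
      linarith
    · have hwb : (⨆ j, -(x j)) ≠ ⊥ := by
        intro hb
        have h1 : -(x 0) ≤ (⊥ : EReal) := hb ▸ le_iSup (fun j => -(x j)) 0
        have h2 : ((-D : ℝ) : EReal) ≤ -(x 0) := by
          rw [show ((-D : ℝ) : EReal) = -((D : ℝ) : EReal) by rw [EReal.coe_neg]]
          exact EReal.neg_le_neg_iff.2 (hub 0)
        exact absurd (le_trans h2 h1) (by simp)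
      have hwr : (⨆ j, -(x j)) = ((((⨆ j, -(x j)).toReal : ℝ)) : EReal) :=
        (EReal.coe_toReal hwt hwb).symm
      conv_lhs => rw [hwr, posPart_coe]
      apply ENNReal.le_of_forall_pos_le_add
      intro ε hε _
      have h1 : ((((⨆ j, -(x j)).toReal - (ε : ℝ) : ℝ)) : EReal) < ⨆ j, -(x j) := by
        conv_rhs => rw [hwr]
        exact_mod_cast sub_lt_self _ (by exact_mod_cast hε)
      obtain ⟨j, hj⟩ := lt_iSup_iff.1 h1
      have h2 : ENNReal.ofReal ((⨆ j, -(x j)).toReal - (ε : ℝ)) ≤ posPart (-(x j)) := by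
        rw [← posPart_coe]
        exact posPart_mono (le_of_lt hj)
      calc ENNReal.ofReal ((⨆ j, -(x j)).toReal)
          = ENNReal.ofReal (((⨆ j, -(x j)).toReal - (ε : ℝ)) + (ε : ℝ)) := by ring_nf
      _ ≤ ENNReal.ofReal ((⨆ j, -(x j)).toReal - (ε : ℝ)) + ENNReal.ofReal (ε : ℝ) :=
          ENNReal.ofReal_add_le
      _ ≤ (⨆ j, posPart (-(x j))) + ε := by
          rw [ENNReal.ofReal_coe_nnreal]
          exact add_le_add_left (le_trans h2 (le_iSup (fun j => posPart (-(x j))) j)) _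


/-- Elementary limit computation for differences. -/
lemma ereal_iInf_sub_le {a c : ℕ → ℝ≥0∞} (ha : ∀ k, a k ≠ ⊤) (hc : ∀ k, c k ≠ ⊤)
    (hamono : Antitone a) (hcmono : Monotone c) :
    (⨅ k, (((a k : ℝ≥0∞) : EReal) - ((c k : ℝ≥0∞) : EReal)))
      ≤ ((⨅ k, a k : ℝ≥0∞) : EReal) - ((⨆ k, c k : ℝ≥0∞) : EReal) := by
  rcases eq_or_ne (⨆ k, c k) ⊤ with hC | hC
  · -- right-hand side is ⊥
    rw [hC, EReal.coe_ennreal_top, EReal.sub_top, le_bot_iff]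
    apply ereal_eq_bot_of_forall_le
    intro b
    -- find k with c k huge
    have h1 : ENNReal.ofReal ((a 0).toReal - b) < ⨆ k, c k := by
      rw [hC]
      exact ENNReal.ofReal_lt_top
    obtain ⟨k, hk⟩ := lt_iSup_iff.1 h1
    apply le_trans (iInf_le _ k)
    have hak : ((a k : ℝ≥0∞) : EReal) = (((a k).toReal : ℝ) : EReal) := coe_ennreal_eq (ha k)
    have hck : ((c k : ℝ≥0∞) : EReal) = (((c k).toReal : ℝ) : EReal) := coe_ennreal_eq (hc k)
    rw [hak, hck, ← EReal.coe_sub]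
    apply EReal.coe_le_coe_iff.2
    have h2 : (a k).toReal ≤ (a 0).toReal := ENNReal.toReal_mono (ha 0) (hamono (Nat.zero_le k))
    have h3 : (a 0).toReal - b ≤ (c k).toReal := by
      rcases le_total ((a 0).toReal - b) 0 with hcase | hcase
      · exact le_trans hcase ENNReal.toReal_nonneg
      · have := ENNReal.toReal_mono (hc k) (le_of_lt hk)
        rwa [ENNReal.toReal_ofReal hcase] at this
    linarith
  · -- everything is finite
    apply ereal_le_add_of_forall_pos
    intro ε hε
    have hA : (⨅ k, a k) ≠ ⊤ := ne_top_of_le_ne_top (ha 0) (iInf_le _ 0)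
    -- k1 : a k1 close to the infimum
    have h1 : (⨅ k, a k) < ENNReal.ofReal ((⨅ k, a k).toReal + ε / 2) := by
      rw [ENNReal.lt_ofReal_iff_toReal_lt hA]
      linarith
    obtain ⟨k1, hk1⟩ := iInf_lt_iff.1 h1
    have hk1' : (a k1).toReal < (⨅ k, a k).toReal + ε / 2 := ENNReal.toReal_lt_of_lt_ofReal hk1
    -- k2 : c k2 close to the supremum
    have h2 : ∃ k2, (⨆ k, c k).toReal - ε / 2 < (c k2).toReal := by
      by_contra hcon
      push_neg at hcon
      have h3 : (0:ℝ) ≤ (⨆ k, c k).toReal - ε / 2 := le_trans ENNReal.toReal_nonneg (hcon 0)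
      have h4 : (⨆ k, c k) ≤ ENNReal.ofReal ((⨆ k, c k).toReal - ε / 2) :=
        iSup_le fun k => (ENNReal.le_ofReal_iff_toReal_le (hc k) h3).2 (hcon k)
      have h5 : (⨆ k, c k).toReal ≤ (⨆ k, c k).toReal - ε / 2 := by
        have := ENNReal.toReal_mono ENNReal.ofReal_ne_top h4
        rwa [ENNReal.toReal_ofReal h3] at this
      linarith
    obtain ⟨k2, hk2⟩ := h2
    set k := max k1 k2 with hk
    apply le_trans (iInf_le _ k)
    have hak : ((a k : ℝ≥0∞) : EReal) = (((a k).toReal : ℝ) : EReal) := coe_ennreal_eq (ha k)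
    have hck : ((c k : ℝ≥0∞) : EReal) = (((c k).toReal : ℝ) : EReal) := coe_ennreal_eq (hc k)
    have hAe : ((⨅ k, a k : ℝ≥0∞) : EReal) = ((((⨅ k, a k : ℝ≥0∞)).toReal : ℝ) : EReal) :=
      coe_ennreal_eq hA
    have hCe : ((⨆ k, c k : ℝ≥0∞) : EReal) = ((((⨆ k, c k : ℝ≥0∞)).toReal : ℝ) : EReal) :=
      coe_ennreal_eq hC
    rw [hak, hck, hAe, hCe, ← EReal.coe_sub, ← EReal.coe_sub, ← EReal.coe_add]
    apply EReal.coe_le_coe_iff.2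
    have h6 : (a k).toReal ≤ (a k1).toReal := ENNReal.toReal_mono (ha k1) (hamono (le_max_left _ _))
    have h7 : (c k2).toReal ≤ (c k).toReal := ENNReal.toReal_mono (hc k) (hcmono (le_max_right _ _))
    linarith

/-- Monotone (downward) convergence for `integralE`. -/
lemma integralE_iInf_le {μ : Measure (Path X)} [IsProbabilityMeasure μ] {D : ℝ}
    (H : ℕ → Path X → EReal) (hmeas : ∀ j, Measurable (H j))
    (hub : ∀ j ω, H j ω ≤ (D : EReal)) (hanti : ∀ j k, j ≤ k → ∀ ω, H k ω ≤ H j ω)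
    (hcfin : ∀ j, (∫⁻ ω, posPart (-(H j ω)) ∂μ) ≠ ⊤) :
    (⨅ j, integralE μ (H j)) ≤ integralE μ (fun ω => ⨅ j, H j ω) := by
  have hDnn : (0:ℝ) ≤ max D 0 := le_max_right _ _
  -- positive parts
  have hposmeas : ∀ j, Measurable fun ω => posPart (H j ω) :=
    fun j => measurable_posPart.comp (hmeas j)
  have hposanti : Antitone fun j => fun ω => posPart (H j ω) :=
    fun j k hjk => fun ω => posPart_mono (hanti j k hjk ω)
  have hfin : (∫⁻ ω, posPart (H 0 ω) ∂μ) ≠ ⊤ := by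
    have hle : (∫⁻ ω, posPart (H 0 ω) ∂μ) ≤ ENNReal.ofReal D * μ Set.univ := by
      rw [← setLIntegral_const]
      rw [← lintegral_indicator MeasurableSet.univ]
      apply lintegral_mono
      intro ω
      simp only [Set.indicator_univ]
      rw [← posPart_coe]
      exact posPart_mono (hub 0 ω)
    exact ne_top_of_le_ne_top (by simp [ENNReal.mul_ne_top]) hle
  have hpos : (∫⁻ ω, posPart ((fun ω => ⨅ j, H j ω) ω) ∂μ) = ⨅ j, ∫⁻ ω, posPart (H j ω) ∂μ := by
    have hptw : ∀ ω, posPart (⨅ j, H j ω) = ⨅ j, posPart (H j ω) :=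
      fun ω => (posPart_iInf (fun j => hub j ω)).symm
    calc (∫⁻ ω, posPart (⨅ j, H j ω) ∂μ) = ∫⁻ ω, ⨅ j, posPart (H j ω) ∂μ :=
          lintegral_congr hptw
    _ = ⨅ j, ∫⁻ ω, posPart (H j ω) ∂μ := lintegral_iInf hposmeas hposanti hfin
  have hneg : (∫⁻ ω, posPart (-((fun ω => ⨅ j, H j ω) ω)) ∂μ)
      = ⨆ j, ∫⁻ ω, posPart (-(H j ω)) ∂μ := by
    have hptw : ∀ ω, posPart (-(⨅ j, H j ω)) = ⨆ j, posPart (-(H j ω)) :=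
      fun ω => (posPart_neg_iInf (fun j => hub j ω)).symm
    calc (∫⁻ ω, posPart (-(⨅ j, H j ω)) ∂μ) = ∫⁻ ω, ⨆ j, posPart (-(H j ω)) ∂μ :=
          lintegral_congr hptw
    _ = ⨆ j, ∫⁻ ω, posPart (-(H j ω)) ∂μ := lintegral_iSup
          (fun j => measurable_posPart.comp ((hmeas j).neg))
          (fun j k hjk ω => posPart_mono (EReal.neg_le_neg_iff.2 (hanti j k hjk ω)))
  unfold integralE
  rw [hpos, hneg]
  apply ereal_iInf_sub_le
  · intro k
    exact ne_top_of_le_ne_top hfin (lintegral_mono fun ω => posPart_mono (hanti 0 k (Nat.zero_le k) ω))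
  · exact hcfin
  · exact fun j k hjk => lintegral_mono fun ω => posPart_mono (hanti j k hjk ω)
  · exact fun j k hjk => lintegral_mono fun ω => posPart_mono (EReal.neg_le_neg_iff.2 (hanti j k hjk ω))


/-! ### more helpers for the measure-theoretic side -/

lemma lintegral_posPart_ne_top {μ : Measure (Path X)} [IsProbabilityMeasure μ]
    {g : Path X → EReal} {b : ℝ} (h : ∀ ω, g ω ≤ (b : EReal)) :
    (∫⁻ ω, posPart (g ω) ∂μ) ≠ ⊤ := by
  have hle : (∫⁻ ω, posPart (g ω) ∂μ) ≤ ∫⁻ _, ENNReal.ofReal b ∂μ := by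
    apply lintegral_mono
    intro ω
    rw [← posPart_coe]
    exact posPart_mono (h ω)
  rw [lintegral_const] at hle
  exact ne_top_of_le_ne_top (by simp [ENNReal.mul_ne_top]) hle

lemma integralE_const_prob {μ : Measure (Path X)} [IsProbabilityMeasure μ] {D : ℝ} (hD : 0 ≤ D) :
    integralE μ (fun _ : Path X => (D : EReal)) = (D : EReal) := by
  unfold integralE
  have h1 : (∫⁻ _ : Path X, posPart ((D : ℝ) : EReal) ∂μ) = ENNReal.ofReal D := by
    rw [posPart_coe, lintegral_const, measure_univ, mul_one]
  have h2 : (∫⁻ _ : Path X, posPart (-((D : ℝ) : EReal)) ∂μ) = 0 := by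
    have hz : posPart (-((D : ℝ) : EReal)) = 0 := by
      rw [← EReal.coe_neg, posPart_coe, ENNReal.ofReal_of_nonpos (by linarith)]
    simp [hz]
  rw [h1, h2]
  rw [EReal.coe_ennreal_ofReal, sup_eq_left.2 hD]
  simp [sub_eq_add_neg]

lemma ereal_le_iInf_add {L : EReal} {x : ℕ → EReal} {c : ℝ}
    (h : ∀ j, L ≤ x j + (c : EReal)) : L ≤ (⨅ j, x j) + (c : EReal) := by
  have h1 : L - (c : EReal) ≤ ⨅ j, x j := by
    apply le_iInf
    intro j
    rw [EReal.sub_le_iff_le_add (Or.inl (EReal.coe_ne_bot c)) (Or.inl (EReal.coe_ne_top c))]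
    exact h j
  calc L = L - (c : EReal) + (c : EReal) := (EReal.sub_add_cancel).symm
  _ ≤ (⨅ j, x j) + (c : EReal) := add_le_add_left h1 _

lemma muUE_mono (Pm : PreciseTree X → List X → Measure (Path X)) (P : ImpreciseTree X)
    {g h : Path X → EReal} (hle : ∀ ω, g ω ≤ h ω) (s : List X) :
    muUE Pm P g s ≤ muUE Pm P h s := by
  apply iSup_mono
  intro p
  apply iSup_mono
  intro _
  apply sInf_le_sInf
  rintro a ⟨g2, hm, hB, hdom, rfl⟩
  exact ⟨g2, hm, hB, fun ω => le_trans (hle ω) (hdom ω), rfl⟩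

/-- Build a precise tree from a selection in the credal sets. -/
noncomputable def mkTree (P : ImpreciseTree X) (q : List X → X → ℝ)
    (hq : ∀ t, q t ∈ P.sets t) : PreciseTree X where
  p := q
  nonneg := fun t x => (P.prob' t (q t) (hq t)).1 x
  sum_one := fun t => (P.prob' t (q t) (hq t)).2

lemma mkTree_compatible (P : ImpreciseTree X) (q : List X → X → ℝ)
    (hq : ∀ t, q t ∈ P.sets t) : Compatible (mkTree P q hq) P := hq

lemma credal_compact (P : ImpreciseTree X) :
    IsCompact {q : List X → X → ℝ | ∀ t, q t ∈ P.sets t} := by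
  have h1 : {q : List X → X → ℝ | ∀ t, q t ∈ P.sets t}
      = Set.pi Set.univ (fun t => P.sets t) := by
    ext q
    simp [Set.mem_pi]
  rw [h1]
  apply isCompact_univ_pi
  intro t
  apply Metric.isCompact_of_isClosed_isBounded (P.closed' t)
  have hsub : P.sets t ⊆ Metric.closedBall 0 1 := by
    intro q hq
    rw [Metric.mem_closedBall, dist_pi_le_iff zero_le_one]
    intro x
    obtain ⟨hnn, hsum⟩ := P.prob' t q hq
    have h2 : q x ≤ 1 := by
      calc q x ≤ ∑ y, q y := Finset.single_le_sum (fun y _ => hnn y) (Finset.mem_univ x)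
      _ = 1 := hsum
    rw [Real.dist_eq]
    simp only [Pi.zero_apply, sub_zero]
    rw [abs_of_nonneg (hnn x)]
    exact h2
  exact Bornology.IsBounded.subset Metric.isBounded_closedBall hsub


/-- Core inequality on the measure-theoretic side. -/
lemma measure_core [TopologicalSpace X] [DiscreteTopology X]
    (P : ImpreciseTree X) (Pm : PreciseTree X → List X → Measure (Path X))
    (hPm : ∀ (p : PreciseTree X) (s : List X), IsTreeMeasure p s (Pm p s)) (s : List X)
    {fn : ℕ → Path X → EReal} {f : Path X → EReal} {B0 : ℝ}
    (hb0 : ∀ ω, fn 0 ω ≤ (B0 : EReal)) (hanti : Antitone fn) (husc : ∀ n, USC (fn n))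
    (hlim : ∀ ω, Tendsto (fun n => fn n ω) atTop (nhds (f ω))) :
    (⨅ n, muUE Pm P (fn n) s) ≤ muUE Pm P f s := by
  classical
  set D : ℝ := max B0 0 with hD
  set L : EReal := ⨅ n, muUE Pm P (fn n) s with hL
  rcases eq_or_ne L ⊥ with hLbot | hLne
  · rw [hLbot]
    exact bot_le
  have hHmeas : ∀ j : ℕ, Measurable (fun ω : Path X => ((Hr fn j (prefixList ω j) : ℝ) : EReal)) :=
    fun j => measurable_of_nmeas (fun t => ((Hr fn j t : ℝ) : EReal)) j
  have hHub : ∀ (j : ℕ) (ω : Path X), ((Hr fn j (prefixList ω j) : ℝ) : EReal) ≤ (D : EReal) :=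
    fun j ω => EReal.coe_le_coe_iff.2 (Hr_bounds hb0 hanti j _).2
  have hHlb : ∀ (j : ℕ) (ω : Path X),
      ((-(j : ℝ) : ℝ) : EReal) ≤ ((Hr fn j (prefixList ω j) : ℝ) : EReal) :=
    fun j ω => EReal.coe_le_coe_iff.2 (Hr_bounds hb0 hanti j _).1
  have hHanti : ∀ j k : ℕ, j ≤ k → ∀ ω : Path X,
      ((Hr fn k (prefixList ω k) : ℝ) : EReal) ≤ ((Hr fn j (prefixList ω j) : ℝ) : EReal) :=
    fun j k hjk ω => EReal.coe_le_coe_iff.2 (Hr_antitone hb0 hanti hjk ω)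
  have hInt : ∀ (p : PreciseTree X) (k : ℕ),
      upperInt (Pm p s) (fun ω => ((Hr fn k (prefixList ω k) : ℝ) : EReal))
        = ((Phi p.p s (Hr fn k) k : ℝ) : EReal) := by
    intro p k
    rw [upperInt_eq (hHmeas k) (B := -(k : ℝ)) (hHlb k)]
    exact integralE_prefix p s (hPm p s) (Hr fn k) k
  apply ereal_le_add_of_forall_pos
  intro ε hε
  have hsel : ∀ k : ℕ, ∃ p : PreciseTree X, Compatible p P ∧
      L ≤ ((Phi p.p s (Hr fn k) k : ℝ) : EReal) + ((ε/2 : ℝ) : EReal) := by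
    intro k
    have hLT : L ≤ muUE Pm P (fun ω => ((Hr fn k (prefixList ω k) : ℝ) : EReal)) s :=
      le_trans (iInf_le _ k) (muUE_mono Pm P (fun ω => le_Hr hb0 hanti k ω) s)
    set T := muUE Pm P (fun ω => ((Hr fn k (prefixList ω k) : ℝ) : EReal)) s with hT
    have hTub : T ≤ (D : EReal) := by
      apply iSup_le
      intro p
      apply iSup_le
      intro hp
      rw [hInt p k]
      haveI := (hPm p s).1
      calc ((Phi p.p s (Hr fn k) k : ℝ) : EReal)
          = integralE (Pm p s) (fun ω => ((Hr fn k (prefixList ω k) : ℝ) : EReal)) :=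
            (integralE_prefix p s (hPm p s) _ k).symm
      _ ≤ integralE (Pm p s) (fun _ => (D : EReal)) := integralE_mono _ (hHub k)
      _ = (D : EReal) := integralE_const_prob (le_max_right _ _)
    have hTne : T ≠ ⊥ := fun hb => hLne (le_bot_iff.1 (hb ▸ hLT))
    have hTnt : T ≠ ⊤ := ne_top_of_le_ne_top (EReal.coe_ne_top D) hTub
    have hTr : T = ((T.toReal : ℝ) : EReal) := (EReal.coe_toReal hTnt hTne).symm
    have hlt : ((T.toReal - ε/2 : ℝ) : EReal) < T := by
      conv_rhs => rw [hTr]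
      exact_mod_cast sub_lt_self _ (by linarith)
    rw [hT] at hlt
    unfold muUE at hlt
    obtain ⟨p, hp⟩ := lt_iSup_iff.1 hlt
    obtain ⟨hcomp, hp2⟩ := lt_iSup_iff.1 hp
    refine ⟨p, hcomp, ?_⟩
    rw [hInt p k] at hp2
    have hle : T.toReal - ε/2 ≤ Phi p.p s (Hr fn k) k := le_of_lt (EReal.coe_lt_coe_iff.1 hp2)
    calc L ≤ T := hLT
    _ = ((T.toReal : ℝ) : EReal) := hTr
    _ ≤ ((Phi p.p s (Hr fn k) k + ε/2 : ℝ) : EReal) := EReal.coe_le_coe_iff.2 (by linarith)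
    _ = ((Phi p.p s (Hr fn k) k : ℝ) : EReal) + ((ε/2 : ℝ) : EReal) := EReal.coe_add _ _
  choose pk hpkc hpkL using hsel
  obtain ⟨qs, hqsK, hclus⟩ := (credal_compact P).exists_clusterPt
    (f := Filter.map (fun k => (pk k).p) atTop)
    (Filter.le_principal_iff.2 (Filter.mem_map.2
      (Filter.Eventually.of_forall (fun k => fun t => hpkc k t))))
  set pstar := mkTree P qs hqsK with hpstar
  haveI : IsProbabilityMeasure (Pm pstar s) := (hPm pstar s).1
  have hfreq : ∀ j : ℕ, ∃ k, j ≤ k ∧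
      |Phi (pk k).p s (Hr fn j) j - Phi qs s (Hr fn j) j| < ε/2 := by
    intro j
    have hU : (fun q : List X → X → ℝ => Phi q s (Hr fn j) j) ⁻¹'
        (Metric.ball (Phi qs s (Hr fn j) j) (ε/2)) ∈ nhds qs :=
      (continuous_Phi s (Hr fn j) j).continuousAt.preimage_mem_nhds
        (Metric.ball_mem_nhds _ (by linarith))
    have hfr : ∃ᶠ k in atTop, (pk k).p ∈ (fun q => Phi q s (Hr fn j) j) ⁻¹'
        (Metric.ball (Phi qs s (Hr fn j) j) (ε/2)) := (mapClusterPt_iff_frequently.1 hclus) _ hU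
    obtain ⟨k, hk1, hk2⟩ := (hfr.and_eventually (eventually_ge_atTop j)).exists
    refine ⟨k, hk2, ?_⟩
    simpa [Metric.mem_ball, Real.dist_eq] using hk1
  have hjb : ∀ j : ℕ, L ≤ ((Phi pstar.p s (Hr fn j) j : ℝ) : EReal) + ((ε : ℝ) : EReal) := by
    intro j
    obtain ⟨k, hkj, hkd⟩ := hfreq j
    have hmono : Phi (pk k).p s (Hr fn k) k ≤ Phi (pk k).p s (Hr fn j) j := by
      have h1 : integralE (Pm (pk k) s) (fun ω => ((Hr fn k (prefixList ω k) : ℝ) : EReal))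
          ≤ integralE (Pm (pk k) s) (fun ω => ((Hr fn j (prefixList ω j) : ℝ) : EReal)) :=
        integralE_mono _ (hHanti j k hkj)
      rw [integralE_prefix (pk k) s (hPm _ s) (Hr fn k) k,
        integralE_prefix (pk k) s (hPm _ s) (Hr fn j) j] at h1
      exact EReal.coe_le_coe_iff.1 h1
    have habs : Phi (pk k).p s (Hr fn j) j ≤ Phi qs s (Hr fn j) j + ε/2 := by
      have h2 := abs_lt.1 hkd
      linarith [h2.2]
    have hps : Phi pstar.p s (Hr fn j) j = Phi qs s (Hr fn j) j := rfl
    calc L ≤ ((Phi (pk k).p s (Hr fn k) k : ℝ) : EReal) + ((ε/2 : ℝ) : EReal) := hpkL k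
    _ = ((Phi (pk k).p s (Hr fn k) k + ε/2 : ℝ) : EReal) := (EReal.coe_add _ _).symm
    _ ≤ ((Phi pstar.p s (Hr fn j) j + ε : ℝ) : EReal) := by
        apply EReal.coe_le_coe_iff.2
        rw [hps]
        linarith
    _ = ((Phi pstar.p s (Hr fn j) j : ℝ) : EReal) + ((ε : ℝ) : EReal) := EReal.coe_add _ _
  have hinf : L ≤ (⨅ j, ((Phi pstar.p s (Hr fn j) j : ℝ) : EReal)) + ((ε : ℝ) : EReal) :=
    ereal_le_iInf_add hjb
  have hMC : (⨅ j, ((Phi pstar.p s (Hr fn j) j : ℝ) : EReal)) ≤ integralE (Pm pstar s) f := by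
    have heq : ∀ j : ℕ, ((Phi pstar.p s (Hr fn j) j : ℝ) : EReal)
        = integralE (Pm pstar s) (fun ω => ((Hr fn j (prefixList ω j) : ℝ) : EReal)) :=
      fun j => (integralE_prefix pstar s (hPm pstar s) (Hr fn j) j).symm
    calc (⨅ j, ((Phi pstar.p s (Hr fn j) j : ℝ) : EReal))
        = ⨅ j, integralE (Pm pstar s) (fun ω => ((Hr fn j (prefixList ω j) : ℝ) : EReal)) :=
          iInf_congr heq
    _ ≤ integralE (Pm pstar s) (fun ω => ⨅ j, ((Hr fn j (prefixList ω j) : ℝ) : EReal)) := by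
          apply integralE_iInf_le _ hHmeas hHub hHanti
          intro j
          apply lintegral_posPart_ne_top (b := (j : ℝ))
          intro ω
          rw [← EReal.coe_neg]
          apply EReal.coe_le_coe_iff.2
          have h2 := (Hr_bounds hb0 hanti j (prefixList ω j)).1
          linarith
    _ = integralE (Pm pstar s) f := by
          congr 1
          funext ω
          exact Hr_iInf hb0 hanti husc hlim ω
  have hfin : integralE (Pm pstar s) f ≤ muUE Pm P f s := by
    apply le_trans (integralE_le_upperInt _ f)
    exact le_trans
      (le_iSup (fun _ : Compatible pstar P => upperInt (Pm pstar s) f)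
        (mkTree_compatible P qs hqsK))
      (le_iSup (fun p => ⨆ _ : Compatible p P, upperInt (Pm p s) f) pstar)
  calc L ≤ (⨅ j, ((Phi pstar.p s (Hr fn j) j : ℝ) : EReal)) + ((ε : ℝ) : EReal) := hinf
  _ ≤ muUE Pm P f s + ((ε : ℝ) : EReal) := add_le_add_left (le_trans hMC hfin) _


theorem stmt11 [TopologicalSpace X] [DiscreteTopology X]
    (P : ImpreciseTree X) (Q : UpperExpTree X)
    (Pm : PreciseTree X → List X → Measure (Path X))
    (hPm : ∀ (p : PreciseTree X) (s : List X), IsTreeMeasure p s (Pm p s))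
    (s : List X) (fn : ℕ → Path X → EReal) (f : Path X → EReal)
    (husc : ∀ n, USC (fn n)) (hba : ∀ n, ∃ B : ℝ, ∀ ω, fn n ω ≤ (B : EReal))
    (hanti : Antitone fn)
    (hlim : ∀ ω, Tendsto (fun n => fn n ω) atTop (nhds (f ω))) :
    Tendsto (fun n => muUE Pm P (fn n) s) atTop (nhds (muUE Pm P f s)) ∧
    Tendsto (fun n => gtUE Q (fn n) s) atTop (nhds (gtUE Q f s)) := by
  obtain ⟨B0, hB0⟩ := hba 0
  have hfle : ∀ n ω, f ω ≤ fn n ω := fun n ω => f_le_fn hanti hlim n ω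
  constructor
  · have hmono : Antitone fun n => muUE Pm P (fn n) s :=
      fun n m h => muUE_mono Pm P (fun ω => hanti h ω) s
    have htend : Tendsto (fun n => muUE Pm P (fn n) s) atTop
        (nhds (⨅ n, muUE Pm P (fn n) s)) := tendsto_atTop_iInf hmono
    have heq : (⨅ n, muUE Pm P (fn n) s) = muUE Pm P f s := by
      apply le_antisymm
      · exact measure_core P Pm hPm s hB0 hanti husc hlim
      · exact le_iInf fun n => muUE_mono Pm P (fun ω => hfle n ω) s
    rwa [heq] at htend
  · have hmono : Antitone fun n => gtUE Q (fn n) s :=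
      fun n m h => gtUE_mono Q (fun ω => hanti h ω) s
    have htend : Tendsto (fun n => gtUE Q (fn n) s) atTop
        (nhds (⨅ n, gtUE Q (fn n) s)) := tendsto_atTop_iInf hmono
    have heq : (⨅ n, gtUE Q (fn n) s) = gtUE Q f s := by
      apply le_antisymm
      · exact game_core Q s hB0 hanti husc hlim
      · exact le_iInf fun n => gtUE_mono Q (fun ω => hfle n ω) s
    rwa [heq] at htend

end UEPaper
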